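/- arXiv:1805.10070 — 2 statements merged into one kernel-verified Lean document; each statement's English description precedes it below -/
import Mathlib

section
/- Let P be an ordered set of strings and define A_T(P) = {(u,v) ∈ Decomp_BWT(P)² : there exists x ∈ u with BWT(P)[x] ≠ $ and LF(P)[x] ∈ v}. Then for all u, v ∈ Decomp_BWT(P), (u,v) ∈ A_T(P) if and only if Dec_Pre[u] is the longest proper prefix of Dec_Pre[v] among the elements of Prefix(←P.S). Consequently the directed graph (Decomp_BWT(P), A_T(P)) is isomorphic, via the bijection Dec_Pre, to the Aho–Corasick tree ACT(←P.S). -/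
namespace BwtXbw

variable {α β : Type*}

/-- An ordered set of strings: a nonempty list of distinct nonempty strings over `α`
(the list order is the enumeration `t_1, …, t_n`). -/
structure OSS (α : Type*) where
  strs : List (List α)
  strs_ne : strs ≠ []
  nodup : strs.Nodup
  mem_ne : ∀ s ∈ strs, s ≠ []

/-- Embed a symbol of `α` into `WithBot α`; `⊥` plays the role of the separator `$`,
which is smaller than every symbol of the alphabet. -/
def sym (a : α) : WithBot α := (a : WithBot α)

/-- The multi-string `m_P = t_1 $ t_2 $ ⋯ $ t_n $` over `WithBot α`. -/
def mP (P : OSS α) : List (WithBot α) :=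
  (P.strs.map (fun s => s.map sym ++ [⊥])).flatten

/-- `SA` is a (0-based) suffix array for `m`: a bijection of `[0, |m|)` onto itself
listing the suffixes of `m` in increasing lexicographic order. -/
def IsSuffixArray [LinearOrder α] (m : List (WithBot α)) (SA : ℕ → ℕ) : Prop :=
  Set.BijOn SA (Set.Iio m.length) (Set.Iio m.length) ∧
  ∀ i j : ℕ, i < j → j < m.length →
    List.Lex (· < ·) (m.drop (SA i)) (m.drop (SA j))

/-- `LRS(P)[i]` (0-based): number of symbols of `m` from position `SA i` up to (but not
including) the first separator at or after position `SA i`. -/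
def lrs [LinearOrder α] (m : List (WithBot α)) (SA : ℕ → ℕ) (i : ℕ) : ℕ :=
  ((m.drop (SA i)).takeWhile (fun c => decide (c ≠ ⊥))).length

/-- Length of the longest common prefix of two lists. -/
def lcpLen [DecidableEq β] : List β → List β → ℕ
  | a :: s, b :: t => if a = b then lcpLen s t + 1 else 0
  | _, _ => 0

/-- `LCP(P)[i] = min(LCP(m_P)[i], LRS(P)[i])` (0-based; `0` at `i = 0`). -/
def lcpP [LinearOrder α] (m : List (WithBot α)) (SA : ℕ → ℕ) (i : ℕ) : ℕ :=
  if i = 0 then 0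
  else min (lcpLen (m.drop (SA (i - 1))) (m.drop (SA i))) (lrs m SA i)

/-- `Decomp_BWT(P)`: the maximal integer intervals `[u.1, u.2] ⊆ [0, |m|)` such that
`LCP(P)[k] = LRS(P)[k]` for every interior position `k ∈ [u.1+1, u.2]`. -/
def DecompBWT [LinearOrder α] (m : List (WithBot α)) (SA : ℕ → ℕ) : Set (ℕ × ℕ) :=
  { u | u.1 ≤ u.2 ∧ u.2 < m.length ∧
        (∀ k, u.1 < k → k ≤ u.2 → lcpP m SA k = lrs m SA k) ∧
        (u.1 = 0 ∨ lcpP m SA u.1 ≠ lrs m SA u.1) ∧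
        (u.2 + 1 = m.length ∨ lcpP m SA (u.2 + 1) ≠ lrs m SA (u.2 + 1)) }

/-- `Dec_Pre[u]`: the reverse of `m[SA u.1 .. SA u.1 + LRS[u.1] − 1]`. -/
def decPre [LinearOrder α] (m : List (WithBot α)) (SA : ℕ → ℕ) (u : ℕ × ℕ) :
    List (WithBot α) :=
  ((m.drop (SA u.1)).take (lrs m SA u.1)).reverse

/-- `Prefix(←P.S)`: all prefixes (including the empty string) of the reversed strings of
`P.S`, viewed inside `WithBot α`. -/
def revPrefixes (P : OSS α) : Set (List (WithBot α)) :=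
  { p | ∃ s ∈ P.strs, p <+: s.reverse.map sym }

/-- `Prefix(P.S)`: all prefixes (including the empty string) of the strings of `P.S`,
viewed inside `WithBot α`. -/
def fwdPrefixes (P : OSS α) : Set (List (WithBot α)) :=
  { p | ∃ s ∈ P.strs, p <+: s.map sym }

/-- `BWT(P)[i]` (0-based): `m[SA i − 1]` if `SA i > 0`, and the last symbol `$ = ⊥`
of `m` otherwise. -/
def bwtArr (m : List (WithBot α)) (SA : ℕ → ℕ) (i : ℕ) : WithBot α :=
  if SA i = 0 then ⊥ else m.getD (SA i - 1) ⊥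

/-- `C[c]`: the number of positions of `m` holding a symbol strictly smaller than `c`. -/
def Cfun [LinearOrder α] (m : List (WithBot α)) (c : WithBot α) : ℕ :=
  (m.filter (fun b => decide (b < c))).length

/-- The Last-to-First mapping (0-based):
`LF[i] = C[BWT[i]] + #{k < i : BWT[k] = BWT[i]}`. -/
def LF [LinearOrder α] (m : List (WithBot α)) (SA : ℕ → ℕ) (i : ℕ) : ℕ :=
  Cfun m (bwtArr m SA i) +
    ((List.range i).filter (fun k => decide (bwtArr m SA k = bwtArr m SA i))).length

/-- The arc set `A_T(P)` on `Decomp_BWT(P)`. -/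
def AT [LinearOrder α] (m : List (WithBot α)) (SA : ℕ → ℕ) :
    Set ((ℕ × ℕ) × (ℕ × ℕ)) :=
  { uv | uv.1 ∈ DecompBWT m SA ∧ uv.2 ∈ DecompBWT m SA ∧
      ∃ x, uv.1.1 ≤ x ∧ x ≤ uv.1.2 ∧ bwtArr m SA x ≠ ⊥ ∧
        uv.2.1 ≤ LF m SA x ∧ LF m SA x ≤ uv.2.2 }

/-- Arc relation of the Aho–Corasick tree on the vertex set `Pref`:
`p` is the longest proper prefix of `q` belonging to `Pref`. -/
def ACTedge (Pref : Set (List β)) (p q : List β) : Prop :=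
  p ∈ Pref ∧ q ∈ Pref ∧ p ≠ q ∧ p <+: q ∧
    ∀ r ∈ Pref, r ≠ q → r <+: q → r.length ≤ p.length

/-- `k` is a failure candidate for the position `i`: `k < i` and
`LRS[k] ≤ LCP[l]` for all `l ∈ [k+1, i]`. -/
def FailCand [LinearOrder α] (m : List (WithBot α)) (SA : ℕ → ℕ) (i k : ℕ) : Prop :=
  k < i ∧ ∀ l, k < l → l ≤ i → lrs m SA k ≤ lcpP m SA l

/-- The arc set `A_F(P)` on `Decomp_BWT(P)`: the largest failure candidate for `u.1`
exists and lies in `v`. -/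
def AF [LinearOrder α] (m : List (WithBot α)) (SA : ℕ → ℕ) :
    Set ((ℕ × ℕ) × (ℕ × ℕ)) :=
  { uv | uv.1 ∈ DecompBWT m SA ∧ uv.2 ∈ DecompBWT m SA ∧
      ∃ k, FailCand m SA uv.1.1 k ∧ (∀ k', FailCand m SA uv.1.1 k' → k' ≤ k) ∧
        uv.2.1 ≤ k ∧ k ≤ uv.2.2 }

/-- Arc relation of the Aho–Corasick failure-link graph on the vertex set `Pref`:
`q` is the longest proper suffix of `p` belonging to `Pref`. -/
def ACFLedge (Pref : Set (List β)) (p q : List β) : Prop :=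
  p ∈ Pref ∧ q ∈ Pref ∧ p ≠ q ∧ q <:+ p ∧
    ∀ r ∈ Pref, r ≠ p → r <:+ p → r.length ≤ q.length

/-- The Run-Length measure `d_B(P) = #{i : BWT[i] ≠ BWT[i+1]}` (0-based, `i` ranging
over the first `|m| − 1` positions). -/
def dB [LinearOrder α] (m : List (WithBot α)) (SA : ℕ → ℕ) : ℕ :=
  ((List.range (m.length - 1)).filter
      (fun i => decide (bwtArr m SA i ≠ bwtArr m SA (i + 1)))).length

/-- `P` is topologically planar: for every prefix `p` of the reverse of some string of
`P.S`, the indices `r` with `p` a prefix of `reverse(t_r)` form a set of consecutive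
integers. -/
def TopPlanar [DecidableEq α] (P : OSS α) : Prop :=
  ∀ p : List α, (∃ s ∈ P.strs, p <+: s.reverse) →
    ∀ r₁ r₂ r₃ : ℕ, r₁ ≤ r₂ → r₂ ≤ r₃ → r₃ < P.strs.length →
      p <+: (P.strs.getD r₁ []).reverse → p <+: (P.strs.getD r₃ []).reverse →
      p <+: (P.strs.getD r₂ []).reverse

/-- `Letter[i]`: the first symbol of the suffix of rank `i`, i.e. `m[SA i]`. -/
def letterArr (m : List (WithBot α)) (SA : ℕ → ℕ) (i : ℕ) : WithBot α :=
  m.getD (SA i) ⊥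

/-- 0-based select: the position of the `(j+1)`-st occurrence of `c` in
`f 0, f 1, …, f (N−1)`. -/
def select0 [LinearOrder α] (f : ℕ → WithBot α) (N : ℕ) (c : WithBot α) (j : ℕ) : ℕ :=
  (((List.range N).filter (fun k => decide (f k = c)))).getD j 0

/-- The inverse Last-to-First mapping (0-based):
`RLF[i] = select_{Letter[i]}(BWT, i − C[Letter[i]])`. -/
def RLF [LinearOrder α] (m : List (WithBot α)) (SA : ℕ → ℕ) (i : ℕ) : ℕ :=
  select0 (bwtArr m SA) m.length (letterArr m SA i)
    (i - Cfun m (letterArr m SA i))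

/-- `d_A(T') = #{i : T'[i] ≠ T'[i+1]}`, the number of adjacent mismatches. -/
def dA [DecidableEq β] : List β → ℕ
  | a :: b :: t => (if a = b then 0 else 1) + dA (b :: t)
  | _ => 0

/-- `T'` is valid for the block decomposition `B` (an interval partition given by the
lengths of the blocks): `T'` splits into blocks of the same lengths as those of `B`,
with the same symbol set blockwise. -/
def ValidArr [DecidableEq β] (B : List (List β)) (T' : List β) : Prop :=
  ∃ B' : List (List β),
    List.Forall₂ (fun b b' => b.length = b'.length ∧ b.toFinset = b'.toFinset) B B' ∧
    B'.flatten = T'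

/-- `T'` is optimal for the block decomposition `B`: valid and of minimal `d_A`. -/
def OptimalArr [DecidableEq β] (B : List (List β)) (T' : List β) : Prop :=
  ValidArr B T' ∧ ∀ T'' : List β, ValidArr B T'' → dA T' ≤ dA T''



section Generic
variable [LinearOrder β]

lemma lex_append_cons (s : List β) {x y : β} (h : x < y) (a b : List β) :
    List.Lex (· < ·) (s ++ x :: a) (s ++ y :: b) := by
  induction s with
  | nil => exact List.Lex.rel h
  | cons c s ih => exact List.Lex.cons ih

lemma prefix_of_between {u A B C : List β} (hA : u <+: A) (hB : u <+: B)
    (h1 : ¬ List.Lex (· < ·) C A) (h2 : ¬ List.Lex (· < ·) B C) : u <+: C := by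
  induction u generalizing A B C with
  | nil => exact List.nil_prefix
  | cons x u ih =>
    obtain ⟨A2, rfl⟩ := hA
    obtain ⟨B2, rfl⟩ := hB
    cases C with
    | nil => exact absurd List.Lex.nil h1
    | cons y C' =>
      rcases lt_trichotomy x y with hxy | hxy | hxy
      · exact absurd (List.Lex.rel hxy) h2
      · subst hxy
        have := ih (u.prefix_append A2) (u.prefix_append B2)
          (fun h => h1 (List.Lex.cons h)) (fun h => h2 (List.Lex.cons h))
        obtain ⟨t, rfl⟩ := this
        exact ⟨t, rfl⟩
      · exact absurd (List.Lex.rel hxy) h1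

end Generic

lemma lcpLen_le [DecidableEq β] {u A B : List β} (hA : u <+: A) (hB : u <+: B) :
    u.length ≤ lcpLen A B := by
  induction u generalizing A B with
  | nil => simp
  | cons x u ih =>
    obtain ⟨A2, rfl⟩ := hA
    obtain ⟨B2, rfl⟩ := hB
    simpa [lcpLen] using ih (u.prefix_append A2) (u.prefix_append B2)

lemma take_eq_of_le_lcpLen [DecidableEq β] :
    ∀ {A B : List β} {k : ℕ}, k ≤ lcpLen A B → A.take k = B.take k := by
  intro A
  induction A with
  | nil => intro B k h; cases B <;> simp_all [lcpLen]
  | cons a A ih =>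
    intro B k h
    cases B with
    | nil => simp [lcpLen] at h; simp [h]
    | cons b B =>
      by_cases hab : a = b
      · subst hab
        cases k with
        | zero => simp
        | succ k =>
          simp only [lcpLen, if_pos rfl] at h
          simp [List.take_succ_cons, ih (Nat.succ_le_succ_iff.mp h)]
      · simp [lcpLen, hab] at h
        simp [h]

lemma takeWhile_middle (p : β → Bool) {s : List β} (hs : ∀ x ∈ s, p x = true) {y : β}
    (hy : p y = false) (r : List β) : (s ++ y :: r).takeWhile p = s := by
  induction s with
  | nil => simp [List.takeWhile_cons, hy]
  | cons a s ih =>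
    rw [List.cons_append, List.takeWhile_cons_of_pos (hs a (by simp)),
      ih (fun x hx => hs x (by simp [hx]))]

lemma filt_len (l : List β) (p : β → Bool) (d : β) :
    (l.filter p).length = ((List.range l.length).filter (fun i => p (l.getD i d))).length := by
  induction l with
  | nil => simp
  | cons a l ih =>
    rw [List.length_cons, List.range_succ_eq_map, List.filter_cons]
    rw [show (0 :: List.map Nat.succ (List.range l.length)).filter (fun i => p ((a :: l).getD i d))
        = (if p ((a::l).getD 0 d) then [0] else []) ++ (List.map Nat.succ (List.range l.length)).filter (fun i => p ((a :: l).getD i d)) from by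
      rw [List.filter_cons]; split <;> simp]
    rw [List.filter_map]
    have : ((List.range l.length).filter ((fun i => p ((a :: l).getD i d)) ∘ Nat.succ))
        = (List.range l.length).filter (fun i => p (l.getD i d)) := by
      apply List.filter_congr
      intro x _
      simp [Function.comp, List.getD_cons_succ]
    rw [this]
    by_cases hpa : p a <;> simp [hpa, ih, List.getD_cons_zero]

lemma list_range_filter_card (n : ℕ) (p : ℕ → Bool) :
    ((List.range n).filter p).length = ((Finset.range n).filter (fun i => p i = true)).card := by
  rw [Finset.card_filter]
  induction n with
  | zero => simp
  | succ n ih =>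
    rw [List.range_succ, Finset.sum_range_succ, List.filter_append, List.length_append, ih]
    congr 1
    rw [List.filter_singleton]
    split <;> simp_all

lemma mem_iff_lt_card_of_lower (A : Finset ℕ) (hlow : ∀ i j : ℕ, j ≤ i → i ∈ A → j ∈ A) (i : ℕ) :
    i ∈ A ↔ i < A.card := by
  constructor
  · intro hi
    have hsub : Finset.range (i + 1) ⊆ A := fun j hj =>
      hlow i j (Nat.lt_succ_iff.mp (Finset.mem_range.mp hj)) hi
    have := Finset.card_le_card hsub
    simpa using this
  · intro hi
    by_contra hni
    have hsub : A ⊆ Finset.range i := by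
      intro a ha
      rw [Finset.mem_range]
      by_contra hlt
      exact hni (hlow a i (Nat.le_of_not_lt hlt) ha)
    exact absurd (Finset.card_le_card hsub) (by simpa using hi)

section Struct
variable [LinearOrder α]

/-- The head of the suffix of rank `i`: symbols up to the first separator. -/
def hdw (m : List (WithBot α)) (SA : ℕ → ℕ) (i : ℕ) : List (WithBot α) :=
  (m.drop (SA i)).takeWhile (fun c => decide (c ≠ ⊥))

lemma lrs_eq_hdw (m : List (WithBot α)) (SA : ℕ → ℕ) (i : ℕ) :
    lrs m SA i = (hdw m SA i).length := rfl

lemma decPre_eq_hdw (m : List (WithBot α)) (SA : ℕ → ℕ) (u : ℕ × ℕ) :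
    decPre m SA u = (hdw m SA u.1).reverse := by
  unfold decPre hdw lrs
  congr 1
  exact (List.prefix_iff_eq_take.mp (List.takeWhile_prefix _)).symm

lemma mem_hdw_ne_bot {m : List (WithBot α)} {SA : ℕ → ℕ} {i : ℕ} {x : WithBot α}
    (hx : x ∈ hdw m SA i) : x ≠ ⊥ := by
  simpa using List.mem_takeWhile_imp hx

lemma mP_concat_bot (P : OSS α) : ∃ l, mP P = l ++ [⊥] := by
  have hstr : P.strs = P.strs.dropLast ++ [P.strs.getLast P.strs_ne] :=
    (List.dropLast_append_getLast P.strs_ne).symm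
  refine ⟨((P.strs.dropLast.map fun s => s.map sym ++ [⊥]).flatten) ++
    ((P.strs.getLast P.strs_ne).map sym), ?_⟩
  rw [mP]
  conv_lhs => rw [hstr]
  simp

lemma bot_mem_drop (P : OSS α) {p : ℕ} (hp : p < (mP P).length) : ⊥ ∈ (mP P).drop p := by
  obtain ⟨l, hl⟩ := mP_concat_bot P
  rw [hl] at hp ⊢
  rw [List.drop_append_of_le_length (by simpa using Nat.lt_succ_iff.mp (by simpa using hp))]
  simp

lemma drop_decomp {l : List (WithBot α)} (hbot : ⊥ ∈ l) :
    ∃ r, l = l.takeWhile (fun c => decide (c ≠ ⊥)) ++ ⊥ :: r := by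
  have hne : l.dropWhile (fun c => decide (c ≠ ⊥)) ≠ [] := by
    intro h
    have : l.takeWhile (fun c => decide (c ≠ ⊥)) = l := by
      conv_rhs => rw [← List.takeWhile_append_dropWhile (p := fun c => decide (c ≠ ⊥)) (l := l), h]
      simp
    rw [← this] at hbot
    simpa using List.mem_takeWhile_imp hbot
  have hhead := List.head_dropWhile_not (fun c => decide (c ≠ ⊥)) (l := l) hne
  obtain ⟨b, r, hbr⟩ := List.exists_cons_of_ne_nil hne
  refine ⟨r, ?_⟩
  have hb : b = ⊥ := by
    have := hhead
    simp only [hbr] at this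
    exact not_not.mp (of_decide_eq_false this)
  conv_lhs => rw [← List.takeWhile_append_dropWhile (p := fun c => decide (c ≠ ⊥)) (l := l), hbr]
  rw [hb]

lemma map_sym_ne_bot {t : List α} {x : WithBot α} (hx : x ∈ t.map sym) :
    (decide (x ≠ ⊥)) = true := by
  obtain ⟨a, _, rfl⟩ := List.mem_map.mp hx
  simp [sym]

omit [LinearOrder α] in
lemma flatten_cons_eq (t : List α) (ts : List (List α)) :
    ((t :: ts).map fun s => s.map sym ++ [⊥]).flatten
      = (t.map sym ++ [⊥]) ++ ((ts.map fun s => s.map sym ++ [⊥]).flatten : List (WithBot α)) := by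
  simp

lemma hdw_suffix_aux (ts : List (List α)) :
    ∀ p, p < ((ts.map fun s => s.map sym ++ [⊥]).flatten).length →
    ∃ t ∈ ts, (((ts.map fun s => s.map sym ++ [⊥]).flatten).drop p).takeWhile
      (fun c => decide (c ≠ ⊥)) <:+ t.map sym := by
  induction ts with
  | nil => simp
  | cons t ts ih =>
    intro p hp
    rw [flatten_cons_eq] at hp ⊢
    by_cases hple : p ≤ t.length
    · refine ⟨t, by simp, ?_⟩
      rw [List.drop_append_of_le_length (by simp; omega),
        List.drop_append_of_le_length (by simpa using hple), List.append_assoc,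
        List.singleton_append,
        takeWhile_middle _ (fun x hx => map_sym_ne_bot (List.mem_of_mem_drop hx)) (by simp) _]
      exact List.drop_suffix _ _
    · push_neg at hple
      have hlen : (t.map sym ++ [⊥] : List (WithBot α)).length = t.length + 1 := by simp
      obtain ⟨t', ht', hsuf⟩ := ih (p - (t.length + 1)) (by
        rw [List.length_append, hlen] at hp; omega)
      refine ⟨t', by simp [ht'], ?_⟩
      rwa [show p = (t.map sym ++ [⊥] : List (WithBot α)).length + (p - (t.length + 1)) by
        rw [hlen]; omega, List.drop_length_add_append]

lemma hdw_exists_aux (ts : List (List α)) :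
    ∀ t ∈ ts, ∀ j ≤ t.length, ∃ p < ((ts.map fun s => s.map sym ++ [⊥]).flatten).length,
      (((ts.map fun s => s.map sym ++ [⊥]).flatten).drop p).takeWhile
        (fun c => decide (c ≠ ⊥)) = (t.map sym).drop j := by
  induction ts with
  | nil => simp
  | cons t' ts ih =>
    intro t ht j hj
    rcases List.mem_cons.mp ht with rfl | ht
    · refine ⟨j, ?_, ?_⟩
      · rw [flatten_cons_eq, List.length_append]; simp; omega
      · rw [flatten_cons_eq, List.drop_append_of_le_length (by simp; omega),
          List.drop_append_of_le_length (by simpa using hj), List.append_assoc,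
          List.singleton_append,
          takeWhile_middle _ (fun x hx => map_sym_ne_bot (List.mem_of_mem_drop hx)) (by simp) _]
    · obtain ⟨p', hp', heq⟩ := ih t ht j hj
      have hlen : (t'.map sym ++ [⊥] : List (WithBot α)).length = t'.length + 1 := by simp
      refine ⟨t'.length + 1 + p', ?_, ?_⟩
      · rw [flatten_cons_eq, List.length_append, hlen]; omega
      · rw [flatten_cons_eq, show t'.length + 1 + p'
          = (t'.map sym ++ [⊥] : List (WithBot α)).length + p' by rw [hlen], List.drop_length_add_append]
        exact heq

lemma hdw_suffix (P : OSS α) (SA : ℕ → ℕ) {i : ℕ} (hi : SA i < (mP P).length) :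
    ∃ t ∈ P.strs, hdw (mP P) SA i <:+ t.map sym :=
  hdw_suffix_aux P.strs (SA i) hi

lemma hdw_exists (P : OSS α) {t : List α} (ht : t ∈ P.strs) {j : ℕ} (hj : j ≤ t.length) :
    ∃ p < (mP P).length, ((mP P).drop p).takeWhile (fun c => decide (c ≠ ⊥))
      = (t.map sym).drop j :=
  hdw_exists_aux P.strs t ht j hj

end Struct

section Rank
variable [LinearOrder α] {P : OSS α} {SA : ℕ → ℕ}

lemma SA_lt {m : List (WithBot α)} (hSA : IsSuffixArray m SA) {i : ℕ}
    (hi : i < m.length) : SA i < m.length :=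
  hSA.1.mapsTo hi

lemma SA_inj {m : List (WithBot α)} (hSA : IsSuffixArray m SA) {i j : ℕ}
    (hi : i < m.length) (hj : j < m.length) (h : SA i = SA j) : i = j :=
  hSA.1.injOn hi hj h

lemma SA_surj {m : List (WithBot α)} (hSA : IsSuffixArray m SA) {q : ℕ}
    (hq : q < m.length) : ∃ i < m.length, SA i = q := by
  obtain ⟨i, hi, hqi⟩ := hSA.1.surjOn hq
  exact ⟨i, hi, hqi⟩

lemma suf_lex {m : List (WithBot α)} (hSA : IsSuffixArray m SA) {i j : ℕ}
    (h : i < j) (hj : j < m.length) :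
    List.Lex (· < ·) (m.drop (SA i)) (m.drop (SA j)) :=
  hSA.2 i j h hj

lemma rank_lt_of_lex {m : List (WithBot α)} (hSA : IsSuffixArray m SA) {i j : ℕ}
    (hi : i < m.length) (hj : j < m.length)
    (h : List.Lex (· < ·) (m.drop (SA i)) (m.drop (SA j))) : i < j := by
  rcases lt_trichotomy i j with hlt | rfl | hgt
  · exact hlt
  · exact absurd h (irrefl_of (List.Lex (· < ·)) _)
  · exact absurd (List.lex_trans (r := (· < ·)) (fun h1 h2 => lt_trans h1 h2) h (suf_lex hSA hgt hi))
      (irrefl_of (List.Lex (· < ·)) _)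

lemma suf_decomp (P : OSS α) (SA : ℕ → ℕ) {i : ℕ} (h : SA i < (mP P).length) :
    ∃ r, (mP P).drop (SA i) = hdw (mP P) SA i ++ ⊥ :: r :=
  drop_decomp (bot_mem_drop P h)

lemma hdw_between (P : OSS α) (hSA : IsSuffixArray (mP P) SA) {i j k : ℕ}
    (hik : i ≤ k) (hkj : k ≤ j) (hj : j < (mP P).length)
    (hij : hdw (mP P) SA i = hdw (mP P) SA j) : hdw (mP P) SA k = hdw (mP P) SA i := by
  set m := mP P with hm
  have hi : i < m.length := lt_of_le_of_lt (hik.trans hkj) hj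
  have hk : k < m.length := lt_of_le_of_lt hkj hj
  obtain ⟨a, ha⟩ := suf_decomp P SA (SA_lt hSA hi)
  obtain ⟨b, hb⟩ := suf_decomp P SA (SA_lt hSA hj)
  obtain ⟨e, he⟩ := suf_decomp P SA (SA_lt hSA hk)
  rw [← hij] at hb
  have hpre : hdw m SA i ++ [⊥] <+: m.drop (SA k) := by
    refine prefix_of_between (A := m.drop (SA i)) (B := m.drop (SA j)) ?_ ?_ ?_ ?_
    · rw [ha]; exact ⟨a, by simp; rfl⟩
    · rw [hb]; exact ⟨b, by simp⟩
    · intro hlex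
      rcases eq_or_lt_of_le hik with rfl | hik'
      · exact absurd hlex (irrefl_of (List.Lex (· < ·)) _)
      · exact absurd (List.lex_trans (r := (· < ·)) (fun h1 h2 => lt_trans h1 h2) hlex (suf_lex hSA hik' hk))
          (irrefl_of (List.Lex (· < ·)) _)
    · intro hlex
      rcases eq_or_lt_of_le hkj with rfl | hkj'
      · exact absurd hlex (irrefl_of (List.Lex (· < ·)) _)
      · exact absurd (List.lex_trans (r := (· < ·)) (fun h1 h2 => lt_trans h1 h2) hlex (suf_lex hSA hkj' hj))
          (irrefl_of (List.Lex (· < ·)) _)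
  obtain ⟨w, hw⟩ := hpre
  rw [List.append_assoc, List.singleton_append] at hw
  rw [hdw, ← hw]
  exact takeWhile_middle _ (fun x hx => by simpa using mem_hdw_ne_bot hx) (by simp) w

lemma lcp_eq_lrs_iff (P : OSS α) (hSA : IsSuffixArray (mP P) SA) {i : ℕ}
    (h0 : 0 < i) (hN : i < (mP P).length) :
    lcpP (mP P) SA i = lrs (mP P) SA i ↔ hdw (mP P) SA (i - 1) = hdw (mP P) SA i := by
  set m := mP P with hm
  have hi1 : i - 1 < m.length := lt_of_le_of_lt (Nat.sub_le _ _) hN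
  obtain ⟨a, ha⟩ := suf_decomp P SA (SA_lt hSA hi1)
  obtain ⟨b, hb⟩ := suf_decomp P SA (SA_lt hSA hN)
  constructor
  · intro heq
    rw [lcpP, if_neg (by omega : ¬ i = 0)] at heq
    have hle : lrs m SA i ≤ lcpLen (m.drop (SA (i - 1))) (m.drop (SA i)) := by
      rcases min_cases (lcpLen (m.drop (SA (i - 1))) (m.drop (SA i))) (lrs m SA i) with
        ⟨h1, h2⟩ | ⟨h1, h2⟩
      · omega
      · omega
    have htake := take_eq_of_le_lcpLen hle
    have hhd : hdw m SA i = (m.drop (SA i)).take (lrs m SA i) :=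
      List.prefix_iff_eq_take.mp (List.takeWhile_prefix _)
    have hpre : hdw m SA i <+: m.drop (SA (i - 1)) := by
      rw [hhd, lrs_eq_hdw, ← lrs_eq_hdw, ← htake]
      exact List.take_prefix _ _
    obtain ⟨r, hr⟩ := hpre
    cases r with
    | nil =>
      exfalso
      have hbm := bot_mem_drop P (SA_lt hSA hi1)
      rw [← hr, List.append_nil] at hbm
      exact (mem_hdw_ne_bot hbm) rfl
    | cons c r2 =>
      by_cases hc : c = ⊥
      · subst hc
        rw [hdw, ← hr,
          takeWhile_middle _ (fun x hx => by simpa using mem_hdw_ne_bot hx) (by simp) r2]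
      · exfalso
        have hlex2 : List.Lex (· < ·) (m.drop (SA i)) (m.drop (SA (i - 1))) := by
          rw [hb, ← hr]
          exact lex_append_cons _ (WithBot.bot_lt_iff_ne_bot.mpr hc) _ _
        have := rank_lt_of_lex hSA hN hi1 hlex2
        omega
  · intro heq
    rw [lcpP, if_neg (by omega : ¬ i = 0)]
    refine min_eq_right ?_
    rw [heq] at ha
    have := lcpLen_le (u := hdw m SA i) (A := m.drop (SA (i-1))) (B := m.drop (SA i))
      ⟨⊥ :: a, ha.symm⟩ ⟨⊥ :: b, hb.symm⟩
    rwa [lrs_eq_hdw]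

lemma hdw_const_on_block (P : OSS α) (hSA : IsSuffixArray (mP P) SA) {u : ℕ × ℕ}
    (hu : u ∈ DecompBWT (mP P) SA) {k : ℕ} (h1 : u.1 ≤ k) (h2 : k ≤ u.2) :
    hdw (mP P) SA k = hdw (mP P) SA u.1 := by
  induction k with
  | zero => rw [Nat.le_zero.mp h1]
  | succ k ih =>
    rcases eq_or_lt_of_le h1 with heq | hlt
    · rw [← heq]
    · have hk1 : u.1 ≤ k := Nat.lt_succ_iff.mp hlt
      have hk2 : k ≤ u.2 := le_trans (Nat.le_succ k) h2
      have hint := hu.2.2.1 (k + 1) hlt h2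
      have hst := (lcp_eq_lrs_iff P hSA (Nat.succ_pos k)
        (lt_of_le_of_lt h2 hu.2.1)).mp hint
      simp only [Nat.succ_sub_one, Nat.add_sub_cancel] at hst
      rw [← hst, ih hk1 hk2]

lemma mem_block_of_hdw_eq (P : OSS α) (hSA : IsSuffixArray (mP P) SA) {u : ℕ × ℕ}
    (hu : u ∈ DecompBWT (mP P) SA) {x : ℕ} (hx : x < (mP P).length)
    (h : hdw (mP P) SA x = hdw (mP P) SA u.1) : u.1 ≤ x ∧ x ≤ u.2 := by
  have hconst : hdw (mP P) SA u.2 = hdw (mP P) SA u.1 :=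
    hdw_const_on_block P hSA hu hu.1 le_rfl
  obtain ⟨hle, hlt, hint, hleft, hright⟩ := hu
  constructor
  · by_contra hxu
    push_neg at hxu
    rcases hleft with h0 | hne
    · omega
    · refine hne ?_
      rw [lcp_eq_lrs_iff P hSA (by omega) (lt_of_le_of_lt hle hlt)]
      have hmid := hdw_between P hSA (by omega : x ≤ u.1 - 1) (Nat.sub_le _ _)
        (lt_of_le_of_lt hle hlt) h
      rw [hmid]
      exact h
  · by_contra hxu
    push_neg at hxu
    rcases hright with h0 | hne
    · omega
    · refine hne ?_
      rw [lcp_eq_lrs_iff P hSA (by omega) (by omega)]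
      have h2x : hdw (mP P) SA u.2 = hdw (mP P) SA x := by
        rw [hconst, ← h]
      have hmid := hdw_between P hSA (Nat.le_succ u.2) (by omega : u.2 + 1 ≤ x) hx h2x
      simp only [Nat.succ_sub_one, Nat.add_sub_cancel]
      rw [hmid, hconst]

end Rank

section Bij
variable [LinearOrder α] {P : OSS α} {SA : ℕ → ℕ}

lemma exists_block (P : OSS α) (hSA : IsSuffixArray (mP P) SA) {x : ℕ}
    (hx : x < (mP P).length) :
    ∃ u ∈ DecompBWT (mP P) SA, u.1 ≤ x ∧ x ≤ u.2 ∧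
      hdw (mP P) SA u.1 = hdw (mP P) SA x := by
  classical
  set A := (Finset.range (mP P).length).filter (fun k => hdw (mP P) SA k = hdw (mP P) SA x) with hA
  have hxA : x ∈ A := by simp [hA, hx]
  have hAne : A.Nonempty := ⟨x, hxA⟩
  set l := A.min' hAne with hldef
  set r := A.max' hAne with hrdef
  have hmemA : ∀ k, k ∈ A ↔ k < (mP P).length ∧ hdw (mP P) SA k = hdw (mP P) SA x := by
    intro k; simp [hA]
  have hlA := A.min'_mem hAne
  have hrA := A.max'_mem hAne
  have hlN : l < (mP P).length := ((hmemA l).mp hlA).1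
  have hrN : r < (mP P).length := ((hmemA r).mp hrA).1
  have hlh : hdw (mP P) SA l = hdw (mP P) SA x := ((hmemA l).mp hlA).2
  have hrh : hdw (mP P) SA r = hdw (mP P) SA x := ((hmemA r).mp hrA).2
  have hlx : l ≤ x := A.min'_le x hxA
  have hxr : x ≤ r := A.le_max' x hxA
  have hlr : hdw (mP P) SA l = hdw (mP P) SA r := hlh.trans hrh.symm
  refine ⟨(l, r), ⟨hlx.trans hxr, hrN, ?_, ?_, ?_⟩, hlx, hxr, hlh⟩
  · intro k hk1 hk2
    rw [lcp_eq_lrs_iff P hSA (by omega) (by omega)]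
    have h1 : hdw (mP P) SA (k - 1) = hdw (mP P) SA l :=
      hdw_between P hSA (by omega : l ≤ k - 1) (by omega) hrN hlr
    have h2 : hdw (mP P) SA k = hdw (mP P) SA l :=
      hdw_between P hSA (by omega : l ≤ k) (by omega) hrN hlr
    rw [h1, h2]
  · by_cases hl0 : l = 0
    · exact Or.inl hl0
    · refine Or.inr fun heq => ?_
      have := (lcp_eq_lrs_iff P hSA (by omega) hlN).mp heq
      have hmem : l - 1 ∈ A := (hmemA (l - 1)).mpr ⟨by omega, this.symm ▸ hlh⟩
      have := A.min'_le (l - 1) hmem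
      omega
  · by_cases hrN' : r + 1 = (mP P).length
    · exact Or.inl hrN'
    · refine Or.inr fun heq => ?_
      have hst := (lcp_eq_lrs_iff P hSA (by omega) (by omega)).mp heq
      simp only [Nat.succ_sub_one, Nat.add_sub_cancel] at hst
      have hmem : r + 1 ∈ A := (hmemA (r + 1)).mpr ⟨by omega, hst ▸ hrh⟩
      have := A.le_max' (r + 1) hmem
      omega

lemma decPre_mapsTo (P : OSS α) (hSA : IsSuffixArray (mP P) SA) :
    Set.MapsTo (decPre (mP P) SA) (DecompBWT (mP P) SA) (revPrefixes P) := by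
  intro u hu
  have hu1 : u.1 < (mP P).length := lt_of_le_of_lt hu.1 hu.2.1
  obtain ⟨t, ht, hsuf⟩ := hdw_suffix P SA (SA_lt hSA hu1)
  refine ⟨t, ht, ?_⟩
  rw [decPre_eq_hdw, List.map_reverse]
  exact List.reverse_prefix.mpr hsuf

lemma decPre_injOn (P : OSS α) (hSA : IsSuffixArray (mP P) SA) :
    Set.InjOn (decPre (mP P) SA) (DecompBWT (mP P) SA) := by
  intro u hu v hv heq
  rw [decPre_eq_hdw, decPre_eq_hdw] at heq
  have hh : hdw (mP P) SA u.1 = hdw (mP P) SA v.1 := by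
    have := congrArg List.reverse heq
    simpa using this
  have hu1 : u.1 < (mP P).length := lt_of_le_of_lt hu.1 hu.2.1
  have hv1 : v.1 < (mP P).length := lt_of_le_of_lt hv.1 hv.2.1
  have h1 := mem_block_of_hdw_eq P hSA hv hu1 hh
  have h2 := mem_block_of_hdw_eq P hSA hu hv1 hh.symm
  have he1 : u.1 = v.1 := le_antisymm h2.1 h1.1
  have he2 : u.2 = v.2 := by
    have hv21 := hv.2.1
    have hu21 := hu.2.1
    have hu11 := hu.1
    have hv11 := hv.1
    by_contra hne
    rcases Nat.lt_or_ge u.2 v.2 with hlt | hge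
    · have hint := hv.2.2.1 (u.2 + 1) (by omega) (by omega)
      rcases hu.2.2.2.2 with hN | hne'
      · omega
      · exact hne' hint
    · have hlt : v.2 < u.2 := by omega
      have hint := hu.2.2.1 (v.2 + 1) (by omega) (by omega)
      rcases hv.2.2.2.2 with hN | hne'
      · omega
      · exact hne' hint
  exact Prod.ext he1 he2

lemma decPre_surjOn (P : OSS α) (hSA : IsSuffixArray (mP P) SA) :
    Set.SurjOn (decPre (mP P) SA) (DecompBWT (mP P) SA) (revPrefixes P) := by
  intro q hq
  obtain ⟨t, ht, hpre⟩ := hq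
  rw [List.map_reverse] at hpre
  have hsuf : q.reverse <:+ t.map sym := by
    rw [← List.reverse_prefix, List.reverse_reverse]
    exact hpre
  have hdropeq := List.suffix_iff_eq_drop.mp hsuf
  have hjle : (t.map sym).length - q.reverse.length ≤ t.length := by
    simp
  obtain ⟨p, hp, hpeq⟩ := hdw_exists P ht hjle
  obtain ⟨i, hi, hSAi⟩ := SA_surj hSA hp
  have hhdwi : hdw (mP P) SA i = q.reverse := by
    rw [hdw, hSAi, hpeq, ← hdropeq]
  obtain ⟨u, hu, _, _, huh⟩ := exists_block P hSA hi
  refine ⟨u, hu, ?_⟩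
  rw [decPre_eq_hdw, huh, hhdwi, List.reverse_reverse]

end Bij

section LFsec
variable [LinearOrder α] {P : OSS α} {SA : ℕ → ℕ}

/-- Inverse of the suffix array. -/
noncomputable def invSA (m : List (WithBot α)) (SA : ℕ → ℕ) (q : ℕ) : ℕ :=
  if h : ∃ i, i < m.length ∧ SA i = q then h.choose else 0

lemma invSA_spec {m : List (WithBot α)} (hSA : IsSuffixArray m SA) {q : ℕ}
    (hq : q < m.length) : invSA m SA q < m.length ∧ SA (invSA m SA q) = q := by
  obtain ⟨i, hi, hSAi⟩ := SA_surj hSA hq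
  have hex : ∃ i, i < m.length ∧ SA i = q := ⟨i, hi, hSAi⟩
  rw [invSA, dif_pos hex]
  exact hex.choose_spec

lemma invSA_SA {m : List (WithBot α)} (hSA : IsSuffixArray m SA) {i : ℕ}
    (hi : i < m.length) : invSA m SA (SA i) = i := by
  have h := invSA_spec hSA (SA_lt hSA hi)
  exact SA_inj hSA h.1 hi h.2

lemma drop_cons_getD {m : List (WithBot α)} {n : ℕ} (h : n < m.length) :
    m.drop n = m.getD n ⊥ :: m.drop (n + 1) := by
  rw [List.getD_eq_getElem _ _ h]
  exact List.drop_eq_getElem_cons h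

lemma lex_cons_inv {r : β → β → Prop} {a b : β} {s t : List β}
    (h : List.Lex r (a :: s) (b :: t)) : r a b ∨ (a = b ∧ List.Lex r s t) := by
  cases h with
  | rel h => exact Or.inl h
  | cons h => exact Or.inr ⟨rfl, h⟩

lemma letter_mono {m : List (WithBot α)} (hSA : IsSuffixArray m SA) {i j : ℕ}
    (hij : i ≤ j) (hj : j < m.length) : letterArr m SA i ≤ letterArr m SA j := by
  rcases eq_or_lt_of_le hij with rfl | hlt
  · exact le_rfl
  · have hi : i < m.length := lt_trans hlt hj
    have hlex := suf_lex hSA hlt hj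
    rw [drop_cons_getD (SA_lt hSA hi), drop_cons_getD (SA_lt hSA hj)] at hlex
    rcases lex_cons_inv hlex with h | ⟨h, _⟩
    · exact le_of_lt h
    · exact le_of_eq h

lemma Cfun_card (m : List (WithBot α)) (c : WithBot α) :
    Cfun m c = ((Finset.range m.length).filter (fun p => m.getD p ⊥ < c)).card := by
  rw [Cfun, filt_len m _ ⊥, list_range_filter_card]
  apply Finset.card_nbij id (by intro x hx; simp at hx ⊢; tauto)
    (Set.injOn_id _)
  intro x hx
  simp at hx ⊢
  tauto

lemma Cfun_eq_rank_card (P : OSS α) (hSA : IsSuffixArray (mP P) SA) (c : WithBot α) :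
    Cfun (mP P) c = ((Finset.range (mP P).length).filter
      (fun i => letterArr (mP P) SA i < c)).card := by
  rw [Cfun_card]
  refine Finset.card_bij (fun p _ => invSA (mP P) SA p) ?_ ?_ ?_
  · intro p hp
    simp only [Finset.mem_filter, Finset.mem_range] at hp ⊢
    obtain ⟨h1, h2⟩ := hp
    refine ⟨(invSA_spec hSA h1).1, ?_⟩
    rw [letterArr, (invSA_spec hSA h1).2]
    exact h2
  · intro p hp q hq h
    simp only [Finset.mem_filter, Finset.mem_range] at hp hq
    have h' : invSA (mP P) SA p = invSA (mP P) SA q := h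
    rw [← (invSA_spec hSA hp.1).2, ← (invSA_spec hSA hq.1).2, h']
  · intro i hi
    simp only [Finset.mem_filter, Finset.mem_range] at hi
    refine ⟨SA i, ?_, invSA_SA hSA hi.1⟩
    simp only [Finset.mem_filter, Finset.mem_range]
    exact ⟨SA_lt hSA hi.1, hi.2⟩

lemma letter_lt_iff (P : OSS α) (hSA : IsSuffixArray (mP P) SA) (c : WithBot α) {i : ℕ}
    (hi : i < (mP P).length) : letterArr (mP P) SA i < c ↔ i < Cfun (mP P) c := by
  classical
  rw [Cfun_eq_rank_card P hSA c]
  have := mem_iff_lt_card_of_lower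
    ((Finset.range (mP P).length).filter (fun i => letterArr (mP P) SA i < c))
    (by
      intro a b hba ha
      simp only [Finset.mem_filter, Finset.mem_range] at ha ⊢
      exact ⟨lt_of_le_of_lt hba ha.1, lt_of_le_of_lt (letter_mono hSA hba ha.1) ha.2⟩) i
  rw [← this]
  simp [hi]

lemma count_letter_eq (P : OSS α) (hSA : IsSuffixArray (mP P) SA) {y : ℕ} {c : WithBot α}
    (hy : y < (mP P).length) (hc : letterArr (mP P) SA y = c) :
    Cfun (mP P) c + ((Finset.range y).filter
      (fun k => letterArr (mP P) SA k = c)).card = y := by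
  classical
  have hCy : Cfun (mP P) c ≤ y := by
    by_contra hlt
    push_neg at hlt
    have := (letter_lt_iff P hSA c hy).mpr hlt
    rw [hc] at this
    exact lt_irrefl c this
  have hset : (Finset.range y).filter (fun k => letterArr (mP P) SA k = c)
      = Finset.Ico (Cfun (mP P) c) y := by
    ext k
    simp only [Finset.mem_filter, Finset.mem_range, Finset.mem_Ico]
    constructor
    · rintro ⟨hky, hkc⟩
      refine ⟨?_, hky⟩
      by_contra hlt
      push_neg at hlt
      have h := (letter_lt_iff P hSA c (lt_trans hky hy)).mpr hlt
      rw [hkc] at h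
      exact lt_irrefl c h
    · rintro ⟨hCk, hky⟩
      refine ⟨hky, ?_⟩
      have hkN : k < (mP P).length := lt_trans hky hy
      have h1 : ¬ letterArr (mP P) SA k < c := fun h =>
        absurd ((letter_lt_iff P hSA c hkN).mp h) (by omega)
      have h2 : letterArr (mP P) SA k ≤ c := hc ▸ letter_mono hSA (le_of_lt hky) hy
      exact le_antisymm h2 (not_lt.mp h1)
  rw [hset, Nat.card_Ico]
  omega

lemma getD_last_bot (P : OSS α) : (mP P).getD ((mP P).length - 1) ⊥ = ⊥ := by
  obtain ⟨l, hl⟩ := mP_concat_bot P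
  rw [hl]
  simp [List.getD_append_right, List.getD]

lemma LF_eq (P : OSS α) (hSA : IsSuffixArray (mP P) SA) {x : ℕ}
    (hx : x < (mP P).length) (hb : bwtArr (mP P) SA x ≠ ⊥) :
    SA x ≠ 0 ∧ LF (mP P) SA x < (mP P).length ∧ SA (LF (mP P) SA x) = SA x - 1 := by
  classical
  have hSAx0 : SA x ≠ 0 := by
    intro h
    rw [bwtArr, if_pos h] at hb
    exact hb rfl
  set c := bwtArr (mP P) SA x with hcdef
  have hcval : c = (mP P).getD (SA x - 1) ⊥ := by rw [hcdef, bwtArr, if_neg hSAx0]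
  have hSAxN : SA x < (mP P).length := SA_lt hSA hx
  have hx1N : SA x - 1 < (mP P).length := by omega
  have hy := invSA_spec hSA hx1N
  set y := invSA (mP P) SA (SA x - 1) with hydef
  have hyc : letterArr (mP P) SA y = c := by rw [letterArr, hy.2, hcval]
  -- generic facts about ranks preceded by c
  have hbwt_pos : ∀ k, k < (mP P).length → bwtArr (mP P) SA k = c → SA k ≠ 0 := by
    intro k _ hk h0
    rw [bwtArr, if_pos h0] at hk
    exact hb (hcdef ▸ hk.symm)
  have hdropk : ∀ k, k < (mP P).length → bwtArr (mP P) SA k = c →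
      (mP P).drop (SA k - 1) = c :: (mP P).drop (SA k) := by
    intro k hk hbk
    have h0 := hbwt_pos k hk hbk
    have hkN := SA_lt hSA hk
    have h1 : SA k - 1 < (mP P).length := by omega
    rw [drop_cons_getD h1, show SA k - 1 + 1 = SA k by omega]
    congr 1
    rw [bwtArr, if_neg h0] at hbk
    exact hbk
  -- the count bijection
  have hcount : ((Finset.range x).filter (fun k => bwtArr (mP P) SA k = c)).card
      = ((Finset.range y).filter (fun k => letterArr (mP P) SA k = c)).card := by
    refine Finset.card_bij (fun k _ => invSA (mP P) SA (SA k - 1)) ?_ ?_ ?_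
    · intro k hk
      simp only [Finset.mem_filter, Finset.mem_range] at hk ⊢
      obtain ⟨hkx, hkc⟩ := hk
      have hkN : k < (mP P).length := lt_trans hkx hx
      have h1 : SA k - 1 < (mP P).length := by
        have := SA_lt hSA hkN; omega
      have hspec := invSA_spec hSA h1
      constructor
      · refine rank_lt_of_lex hSA hspec.1 hy.1 ?_
        rw [hspec.2, hy.2, hdropk k hkN hkc, hdropk x hx hcdef.symm]
        exact List.Lex.cons (suf_lex hSA hkx hx)
      · rw [letterArr, hspec.2]
        have h0 := hbwt_pos k hkN hkc
        rw [bwtArr, if_neg h0] at hkc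
        exact hkc
    · intro k1 hk1 k2 hk2 heq
      simp only [Finset.mem_filter, Finset.mem_range] at hk1 hk2
      have hk1N : k1 < (mP P).length := lt_trans hk1.1 hx
      have hk2N : k2 < (mP P).length := lt_trans hk2.1 hx
      have h11 : SA k1 - 1 < (mP P).length := by have := SA_lt hSA hk1N; omega
      have h21 : SA k2 - 1 < (mP P).length := by have := SA_lt hSA hk2N; omega
      have e1 := (invSA_spec hSA h11).2
      have e2 := (invSA_spec hSA h21).2
      have heq' : invSA (mP P) SA (SA k1 - 1) = invSA (mP P) SA (SA k2 - 1) := heq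
      rw [heq'] at e1
      have hSAeq : SA k1 = SA k2 := by
        have h01 := hbwt_pos k1 hk1N hk1.2
        have h02 := hbwt_pos k2 hk2N hk2.2
        omega
      exact SA_inj hSA hk1N hk2N hSAeq
    · intro j hj
      simp only [Finset.mem_filter, Finset.mem_range] at hj
      obtain ⟨hjy, hjc⟩ := hj
      have hjN : j < (mP P).length := lt_trans hjy hy.1
      have hSAjN : SA j < (mP P).length := SA_lt hSA hjN
      have hcbot : c ≠ ⊥ := hcdef ▸ hb
      have hSAj_ne : SA j ≠ (mP P).length - 1 := by
        intro h
        rw [letterArr, h, getD_last_bot P] at hjc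
        exact hcbot hjc.symm
      have hSAj1 : SA j + 1 < (mP P).length := by omega
      have hk := invSA_spec hSA hSAj1
      refine ⟨invSA (mP P) SA (SA j + 1), ?_, ?_⟩
      · simp only [Finset.mem_filter, Finset.mem_range]
        have hSAk0 : SA (invSA (mP P) SA (SA j + 1)) ≠ 0 := by rw [hk.2]; omega
        have hbk : bwtArr (mP P) SA (invSA (mP P) SA (SA j + 1)) = c := by
          rw [bwtArr, if_neg hSAk0, hk.2, show SA j + 1 - 1 = SA j from by omega]
          exact hjc
        refine ⟨?_, hbk⟩
        refine rank_lt_of_lex hSA hk.1 hx ?_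
        have hlexjy := suf_lex hSA hjy hy.1
        rw [hy.2, hdropk x hx hcdef.symm, drop_cons_getD hSAjN] at hlexjy
        have hlj : (mP P).getD (SA j) ⊥ = c := hjc
        rw [hlj] at hlexjy
        rw [hk.2]
        rcases lex_cons_inv hlexjy with h | ⟨_, h⟩
        · exact absurd h (lt_irrefl c)
        · exact h
      · show invSA (mP P) SA (SA (invSA (mP P) SA (SA j + 1)) - 1) = j
        rw [hk.2, show SA j + 1 - 1 = SA j by omega, invSA_SA hSA hjN]
  -- conclude
  have hLF : LF (mP P) SA x = y := by
    rw [LF, ← hcdef, list_range_filter_card]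
    have : ((Finset.range x).filter
        (fun k => (decide (bwtArr (mP P) SA k = bwtArr (mP P) SA x)) = true)).card
        = ((Finset.range x).filter (fun k => bwtArr (mP P) SA k = c)).card := by
      congr 1
      apply Finset.filter_congr
      intro k _
      rw [hcdef, decide_eq_true_eq]
    rw [this, hcount, count_letter_eq P hSA hy.1 hyc]
  exact ⟨hSAx0, hLF ▸ hy.1, by rw [hLF, hy.2]⟩

end LFsec

section Main
variable [LinearOrder α] {P : OSS α} {SA : ℕ → ℕ}

omit [LinearOrder α] in
lemma revPrefixes_closed (P : OSS α) {p q : List (WithBot α)} (h : p <+: q)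
    (hq : q ∈ revPrefixes P) : p ∈ revPrefixes P := by
  obtain ⟨t, ht, hpre⟩ := hq
  exact ⟨t, ht, h.trans hpre⟩

omit [LinearOrder α] in
lemma ACTedge_iff (P : OSS α) {p q : List (WithBot α)} :
    ACTedge (revPrefixes P) p q ↔
      p ∈ revPrefixes P ∧ q ∈ revPrefixes P ∧ q ≠ [] ∧ p = q.dropLast := by
  constructor
  · rintro ⟨hp, hq, hne, hpre, hmax⟩
    have hqne : q ≠ [] := by
      rintro rfl
      exact hne (List.prefix_nil.mp hpre)
    refine ⟨hp, hq, hqne, ?_⟩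
    have hplen : p.length < q.length := by
      rcases lt_or_eq_of_le hpre.length_le with h | h
      · exact h
      · exact absurd (hpre.eq_of_length h) hne
    have hdne : q.dropLast ≠ q := by
      intro h
      have := congrArg List.length h
      rw [List.length_dropLast] at this
      have : 0 < q.length := List.length_pos_iff.mpr hqne
      omega
    have hdlen := hmax q.dropLast
      (revPrefixes_closed P (List.dropLast_prefix q) hq) hdne (List.dropLast_prefix q)
    rw [List.length_dropLast] at hdlen
    have hlen : p.length = q.length - 1 := by omega
    rw [List.prefix_iff_eq_take.mp hpre, List.dropLast_eq_take, hlen]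
  · rintro ⟨hp, hq, hqne, rfl⟩
    have h0 : 0 < q.length := List.length_pos_iff.mpr hqne
    refine ⟨hp, hq, ?_, List.dropLast_prefix q, ?_⟩
    · intro h
      have := congrArg List.length h
      rw [List.length_dropLast] at this
      omega
    · intro r hr hrne hrpre
      have : r.length < q.length := by
        rcases lt_or_eq_of_le hrpre.length_le with h | h
        · exact h
        · exact absurd (hrpre.eq_of_length h) hrne
      rw [List.length_dropLast]
      omega

end Main


/-- `(u,v) ∈ A_T(P)` iff `Dec_Pre[u]` is the longest proper prefix of
`Dec_Pre[v]` among the elements of `Prefix(←P.S)`; consequently (together with the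
bijectivity of `Dec_Pre`) the graph `(Decomp_BWT(P), A_T(P))` is isomorphic, via
`Dec_Pre`, to the Aho–Corasick tree `ACT(←P.S)`. -/
theorem AT_iso_ACT [Fintype α] [LinearOrder α] (P : OSS α) (SA : ℕ → ℕ)
    (hSA : IsSuffixArray (mP P) SA) :
    Set.BijOn (decPre (mP P) SA) (DecompBWT (mP P) SA) (revPrefixes P) ∧
    ∀ u v : ℕ × ℕ, u ∈ DecompBWT (mP P) SA → v ∈ DecompBWT (mP P) SA →
      ((u, v) ∈ AT (mP P) SA ↔
        ACTedge (revPrefixes P) (decPre (mP P) SA u) (decPre (mP P) SA v)) := by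
  classical
  refine ⟨⟨decPre_mapsTo P hSA, decPre_injOn P hSA, decPre_surjOn P hSA⟩, ?_⟩
  intro u v hu hv
  constructor
  · rintro ⟨_, _, x, hx1, hx2, hbx, hv1, hv2⟩
    have hxN : x < (mP P).length := lt_of_le_of_lt hx2 hu.2.1
    have hHx : hdw (mP P) SA x = hdw (mP P) SA u.1 := hdw_const_on_block P hSA hu hx1 hx2
    obtain ⟨hSAx0, hLFN, hSALF⟩ := LF_eq P hSA hxN hbx
    have hHLF : hdw (mP P) SA (LF (mP P) SA x) = hdw (mP P) SA v.1 :=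
      hdw_const_on_block P hSA hv hv1 hv2
    have hSAxN : SA x < (mP P).length := SA_lt hSA hxN
    have hLFlt : SA (LF (mP P) SA x) < (mP P).length := SA_lt hSA hLFN
    have hgetD : (mP P).getD (SA x - 1) ⊥ = bwtArr (mP P) SA x := by
      rw [bwtArr, if_neg hSAx0]
    have hhd : hdw (mP P) SA (LF (mP P) SA x) = bwtArr (mP P) SA x :: hdw (mP P) SA x := by
      rw [hdw, drop_cons_getD hLFlt, hSALF, show SA x - 1 + 1 = SA x from by omega, hgetD,
        List.takeWhile_cons_of_pos (by simpa using hbx)]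
      rfl
    rw [ACTedge_iff]
    refine ⟨decPre_mapsTo P hSA hu, decPre_mapsTo P hSA hv, ?_, ?_⟩
    · rw [decPre_eq_hdw, ← hHLF, hhd]
      simp
    · rw [decPre_eq_hdw, decPre_eq_hdw, ← hHLF, hhd, ← hHx, List.reverse_cons,
        List.dropLast_concat]
  · intro hedge
    rw [ACTedge_iff] at hedge
    obtain ⟨hp, hq, hqne, hpd⟩ := hedge
    rw [decPre_eq_hdw, decPre_eq_hdw] at hpd
    have hvne : hdw (mP P) SA v.1 ≠ [] := by
      intro h
      rw [decPre_eq_hdw, h] at hqne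
      exact hqne rfl
    obtain ⟨c, t1, hv1eq⟩ := List.exists_cons_of_ne_nil hvne
    have hq1 : decPre (mP P) SA v = t1.reverse ++ [c] := by
      rw [decPre_eq_hdw, hv1eq, List.reverse_cons]
    have hput : hdw (mP P) SA u.1 = t1 := by
      have h2 : (hdw (mP P) SA u.1).reverse = t1.reverse := by
        rw [hpd, hv1eq, List.reverse_cons, List.dropLast_concat]
      have h3 := congrArg List.reverse h2
      simpa using h3
    have hcbot : c ≠ ⊥ := mem_hdw_ne_bot (hv1eq ▸ List.mem_cons_self (a := c) (l := t1))
    have hv1N : v.1 < (mP P).length := lt_of_le_of_lt hv.1 hv.2.1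
    have hSAv1N : SA v.1 < (mP P).length := SA_lt hSA hv1N
    obtain ⟨r, hr⟩ := suf_decomp P SA hSAv1N
    rw [hv1eq] at hr
    have hr' : (mP P).drop (SA v.1) = c :: (hdw (mP P) SA u.1 ++ ⊥ :: r) := by
      rw [hr, List.cons_append, hput]
    have hlen2 : SA v.1 + 1 < (mP P).length := by
      have := congrArg List.length hr'
      rw [List.length_drop, List.length_cons, List.length_append, List.length_cons] at this
      omega
    have hkspec := invSA_spec hSA hlen2
    set x := invSA (mP P) SA (SA v.1 + 1) with hxdef
    have hSAx : SA x = SA v.1 + 1 := hkspec.2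
    have hxN : x < (mP P).length := hkspec.1
    have hdropx : (mP P).drop (SA x) = hdw (mP P) SA u.1 ++ ⊥ :: r := by
      have hcons := drop_cons_getD hSAv1N
      rw [hr'] at hcons
      have := (List.cons.injEq _ _ _ _).mp hcons
      rw [hSAx, ← this.2]
    have hbwtx : bwtArr (mP P) SA x = c := by
      rw [bwtArr, if_neg (by omega : ¬ SA x = 0), hSAx,
        show SA v.1 + 1 - 1 = SA v.1 from by omega]
      have hcons := drop_cons_getD hSAv1N
      rw [hr'] at hcons
      exact ((List.cons.injEq _ _ _ _).mp hcons).1.symm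
    have hbne : bwtArr (mP P) SA x ≠ ⊥ := by rw [hbwtx]; exact hcbot
    have hhdx : hdw (mP P) SA x = hdw (mP P) SA u.1 := by
      rw [hdw, hdropx]
      exact takeWhile_middle _ (fun z hz => by simpa using mem_hdw_ne_bot hz) (by simp) r
    obtain ⟨hx1, hx2⟩ := mem_block_of_hdw_eq P hSA hu hxN hhdx
    obtain ⟨hSAx0, hLFN, hSALF⟩ := LF_eq P hSA hxN hbne
    have hLFv : LF (mP P) SA x = v.1 := by
      refine SA_inj hSA hLFN hv1N ?_
      rw [hSALF, hSAx]
      omega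
    exact ⟨hu, hv, x, hx1, hx2, hbne, by rw [hLFv], by rw [hLFv]; exact hv.1⟩

end BwtXbw
end

section
/- Let P be an ordered set of strings and define A_F(P) = {(u,v) ∈ Decomp_BWT(P)² : writing u = [i,j], the largest index k < i satisfying LRS(P)[k] ≤ LCP(P)[l] for all l ∈ [k+1, i] exists and belongs to v}. Then for all u, v ∈ Decomp_BWT(P), (u,v) ∈ A_F(P) if and only if Dec_Pre[v] is the longest proper suffix of Dec_Pre[u] among the elements of Prefix(←P.S). Consequently the directed graph (Decomp_BWT(P), A_F(P)) is isomorphic, via the bijection Dec_Pre, to the Aho–Corasick failure-link graph ACFL(←P.S). -/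
namespace BwtXbw

variable {α β : Type*}

set_option linter.unusedSectionVars false
set_option linter.unusedVariables false
open List

section Aux0

open List

variable {β : Type*} [LinearOrder β]

theorem lex_cons_cons {a b : β} {l l' : List β} :
    List.Lex (· < ·) (a :: l) (b :: l') ↔ a < b ∨ (a = b ∧ List.Lex (· < ·) l l') := by
  constructor
  · intro h
    cases h with
    | rel h => exact Or.inl h
    | cons h => exact Or.inr ⟨rfl, h⟩
  · rintro (h | ⟨rfl, h⟩)
    · exact List.Lex.rel h
    · exact List.Lex.cons h

theorem lex_append_left {p a b : List β} (h : List.Lex (· < ·) a b) :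
    List.Lex (· < ·) (p ++ a) (p ++ b) := by
  induction p with
  | nil => exact h
  | cons x p ih => exact List.Lex.cons ih

theorem lex_asymm {a b : List β} (h : List.Lex (· < ·) a b) (h' : List.Lex (· < ·) b a) :
    False := by
  have : IsAsymm (List β) (List.Lex (· < ·)) := inferInstance
  exact this.asymm a b h h'

/-- If `p` is a prefix of `a` and of `c`, and `b` lies lexicographically between them,
then `p` is a prefix of `b`. -/
theorem between_prefix : ∀ (p a b c : List β), p <+: a → p <+: c →
    List.Lex (· < ·) a b → List.Lex (· < ·) b c → p <+: b
  | [], _, b, _, _, _, _, _ => List.nil_prefix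
  | x :: p, a, b, c, ha, hc, hab, hbc => by
    obtain ⟨a', rfl⟩ := ha
    obtain ⟨c', rfl⟩ := hc
    match b with
    | [] => exact absurd hab (by intro h; cases h)
    | y :: b' =>
      rw [cons_append] at hab hbc
      rcases lex_cons_cons.1 hab with h1 | ⟨e1, h1⟩
      · rcases lex_cons_cons.1 hbc with h2 | ⟨e2, _⟩
        · exact absurd (h1.trans h2) (lt_irrefl x)
        · exact absurd (e2 ▸ h1) (lt_irrefl _)
      · rcases lex_cons_cons.1 hbc with h2 | ⟨e2, h2⟩
        · exact absurd (e1 ▸ h2) (lt_irrefl _)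
        · subst e1
          exact List.cons_prefix_cons.2 ⟨rfl, between_prefix p _ _ _
            ⟨a', rfl⟩ ⟨c', rfl⟩ h1 h2⟩

theorem lcpLen_le_left : ∀ (a b : List β), lcpLen a b ≤ a.length
  | [], _ => by simp [lcpLen]
  | _ :: _, [] => by simp [lcpLen]
  | x :: a, y :: b => by
    rw [lcpLen]
    split
    · simpa using lcpLen_le_left a b
    · simp

theorem prefix_lcpLen : ∀ (p a b : List β), p <+: a → p <+: b → p.length ≤ lcpLen a b
  | [], _, _, _, _ => Nat.zero_le _
  | x :: p, a, b, ha, hb => by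
    obtain ⟨a', rfl⟩ := ha
    obtain ⟨b', rfl⟩ := hb
    rw [cons_append, cons_append, lcpLen, if_pos rfl]
    simpa using prefix_lcpLen p _ _ ⟨a', rfl⟩ ⟨b', rfl⟩

theorem take_lcpLen_eq : ∀ (a b : List β), a.take (lcpLen a b) = b.take (lcpLen a b)
  | [], b => by simp [lcpLen]
  | _ :: _, [] => by simp [lcpLen]
  | x :: a, y :: b => by
    rw [lcpLen]
    split
    · rename_i h
      simp [h, take_lcpLen_eq a b]
    · simp

theorem take_eq_of_le_lcpLen_s4 {a b : List β} {k : ℕ} (h : k ≤ lcpLen a b) :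
    a.take k = b.take k := by
  have key := take_lcpLen_eq a b
  have h1 : a.take k = (a.take (lcpLen a b)).take k := by rw [take_take, min_eq_left h]
  have h2 : b.take k = (b.take (lcpLen a b)).take k := by rw [take_take, min_eq_left h]
  rw [h1, h2, key]


end Aux0

section Aux1

open List

variable {α : Type*} [LinearOrder α]

theorem sym_ne_bot (a : α) : sym a ≠ ⊥ := WithBot.coe_ne_bot

theorem takeWhile_sep (s : List α) (t : List (WithBot α)) :
    (s.map sym ++ ⊥ :: t).takeWhile (fun c => decide (c ≠ ⊥)) = s.map sym := by
  induction s with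
  | nil => simp [takeWhile]
  | cons a s ih =>
    rw [map_cons, cons_append, takeWhile_cons_of_pos (by simp [sym_ne_bot]), ih]

theorem prefix_takeWhile {P : WithBot α → Bool} :
    ∀ (p l : List (WithBot α)), p <+: l → (∀ a ∈ p, P a = true) → p <+: l.takeWhile P
  | [], _, _, _ => List.nil_prefix
  | x :: p, l, hp, hP => by
    obtain ⟨l', rfl⟩ := hp
    rw [cons_append, takeWhile_cons, hP x (by simp)]
    exact List.cons_prefix_cons.2 ⟨rfl, prefix_takeWhile p _ ⟨l', rfl⟩
      (fun a ha => hP a (by simp [ha]))⟩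

/-- Structure of suffixes of the multistring. -/
theorem flat_drop : ∀ (L : List (List α)) (p : ℕ),
    p < ((L.map (fun s => s.map sym ++ [⊥])).flatten).length →
    ∃ t ∈ L, ∃ s, s <:+ t ∧ ∃ rest,
      ((L.map (fun s => s.map sym ++ [⊥])).flatten).drop p = s.map sym ++ ⊥ :: rest
  | [], p, hp => by simp at hp
  | t :: L, p, hp => by
    rw [map_cons, flatten_cons] at hp ⊢
    by_cases h : p ≤ t.length
    · refine ⟨t, by simp, t.drop p, t.drop_suffix p, (L.map (fun s => s.map sym ++ [⊥])).flatten, ?_⟩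
      rw [append_assoc, singleton_append,
        drop_append_of_le_length (by simpa using h), ← map_drop]
    · push_neg at h
      have hlen : (t.map sym ++ [⊥]).length = t.length + 1 := by simp
      obtain ⟨q, rfl⟩ : ∃ q, p = (t.length + 1) + q :=
        ⟨p - (t.length + 1), by omega⟩
      rw [length_append, hlen] at hp
      have hq : q < ((L.map (fun s => s.map sym ++ [⊥])).flatten).length := by omega
      obtain ⟨t', ht', s, hs, rest, hrest⟩ := flat_drop L q hq
      refine ⟨t', by simp [ht'], s, hs, rest, ?_⟩
      rw [← hlen, drop_length_add_append, hrest]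

theorem flat_exists : ∀ (L : List (List α)) (t : List α), t ∈ L → ∀ s : List α, s <:+ t →
    ∃ p, p < ((L.map (fun s => s.map sym ++ [⊥])).flatten).length ∧ ∃ rest,
      ((L.map (fun s => s.map sym ++ [⊥])).flatten).drop p = s.map sym ++ ⊥ :: rest
  | [], t, ht, _, _ => by simp at ht
  | t₀ :: L, t, ht, s, hs => by
    rw [map_cons, flatten_cons]
    rcases List.mem_cons.1 ht with rfl | ht
    · obtain ⟨u, rfl⟩ := hs
      refine ⟨u.length, ?_, ((L.map (fun s => s.map sym ++ [⊥])).flatten), ?_⟩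
      · simp
      · rw [map_append, append_assoc, append_assoc, drop_append_of_le_length (by simp)]
        simp
    · obtain ⟨p, hp, rest, hrest⟩ := flat_exists L t ht s hs
      refine ⟨(t₀.length + 1) + p, ?_, rest, ?_⟩
      · simp only [length_append, length_map]
        simp at hp ⊢
        omega
      · have hlen : (t₀.map sym ++ [⊥]).length = t₀.length + 1 := by simp
        rw [← hlen, drop_length_add_append, hrest]

theorem mP_drop (P : OSS α) {p : ℕ} (hp : p < (mP P).length) :
    ∃ t ∈ P.strs, ∃ s, s <:+ t ∧ ∃ rest, (mP P).drop p = s.map sym ++ ⊥ :: rest :=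
  flat_drop P.strs p hp

theorem mP_exists (P : OSS α) {t : List α} (ht : t ∈ P.strs) {s : List α} (hs : s <:+ t) :
    ∃ p, p < (mP P).length ∧ ∃ rest, (mP P).drop p = s.map sym ++ ⊥ :: rest :=
  flat_exists P.strs t ht s hs

theorem mem_revPrefixes_iff (P : OSS α) (r : List (WithBot α)) :
    r ∈ revPrefixes P ↔ ∃ t ∈ P.strs, ∃ s, s <:+ t ∧ r = (s.map sym).reverse := by
  constructor
  · rintro ⟨t, ht, hr⟩
    obtain ⟨k, hk⟩ : ∃ k, r = (List.take k t.reverse).map sym :=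
      ⟨r.length, by rw [map_take, ← prefix_iff_eq_take.1 hr]⟩
    refine ⟨t, ht, (List.take k t.reverse).reverse, ?_, ?_⟩
    · have h2 := List.reverse_suffix.2 (List.take_prefix k t.reverse)
      rwa [reverse_reverse] at h2
    · rw [← map_reverse, reverse_reverse]
      exact hk
  · rintro ⟨t, ht, s, hs, rfl⟩
    refine ⟨t, ht, ?_⟩
    rw [← map_reverse]
    exact (List.reverse_prefix.2 hs).map sym


end Aux1

section Aux2

open List

variable {α : Type*} [LinearOrder α]

/-- The "string part" of the suffix of rank `i`. -/
def pt (P : OSS α) (SA : ℕ → ℕ) (i : ℕ) : List (WithBot α) :=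
  ((mP P).drop (SA i)).takeWhile (fun c => decide (c ≠ ⊥))

theorem lrs_eq (P : OSS α) (SA : ℕ → ℕ) (i : ℕ) :
    lrs (mP P) SA i = (pt P SA i).length := rfl

theorem pt_prefix (P : OSS α) (SA : ℕ → ℕ) (i : ℕ) :
    pt P SA i <+: (mP P).drop (SA i) := takeWhile_prefix _

theorem pt_no_bot (P : OSS α) (SA : ℕ → ℕ) (i : ℕ) :
    ∀ c ∈ pt P SA i, c ≠ ⊥ := by
  intro c hc
  have := List.mem_takeWhile_imp hc
  simpa using this

theorem decPre_eq (P : OSS α) (SA : ℕ → ℕ) (u : ℕ × ℕ) :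
    decPre (mP P) SA u = (pt P SA u.1).reverse := by
  unfold decPre
  congr 1
  rw [lrs_eq]
  exact (prefix_iff_eq_take.1 (pt_prefix P SA u.1)).symm

section WithHyp

variable (P : OSS α) (SA : ℕ → ℕ) (hSA : IsSuffixArray (mP P) SA)
include hSA

theorem SA_lt_s4 {i : ℕ} (hi : i < (mP P).length) : SA i < (mP P).length :=
  hSA.1.1 hi

theorem suf_lex_s4 {i j : ℕ} (hij : i < j) (hj : j < (mP P).length) :
    List.Lex (· < ·) ((mP P).drop (SA i)) ((mP P).drop (SA j)) :=
  hSA.2 i j hij hj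

theorem rank_exists {p : ℕ} (hp : p < (mP P).length) :
    ∃ i, i < (mP P).length ∧ SA i = p := by
  obtain ⟨i, hi, hieq⟩ := hSA.1.2.2 hp
  exact ⟨i, hi, hieq⟩

theorem pt_spec {i : ℕ} (hi : i < (mP P).length) :
    ∃ t ∈ P.strs, ∃ s, s <:+ t ∧ pt P SA i = s.map sym ∧
      ∃ rest, (mP P).drop (SA i) = pt P SA i ++ ⊥ :: rest := by
  obtain ⟨t, ht, s, hs, rest, hrest⟩ := mP_drop P (SA_lt_s4 P SA hSA hi)
  have hpt : pt P SA i = s.map sym := by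
    rw [pt, hrest, takeWhile_sep]
  exact ⟨t, ht, s, hs, hpt, rest, by rw [hrest, hpt]⟩

theorem ptb_prefix {i : ℕ} (hi : i < (mP P).length) :
    pt P SA i ++ [⊥] <+: (mP P).drop (SA i) := by
  obtain ⟨t, ht, s, hs, hpt, rest, hrest⟩ := pt_spec P SA hSA hi
  exact ⟨rest, by rw [hrest]; simp⟩

theorem bot_mem_suf {i : ℕ} (hi : i < (mP P).length) :
    (⊥ : WithBot α) ∈ (mP P).drop (SA i) := by
  obtain ⟨t, ht, s, hs, hpt, rest, hrest⟩ := pt_spec P SA hSA hi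
  rw [hrest]
  simp

theorem pt_rev_mem {i : ℕ} (hi : i < (mP P).length) :
    (pt P SA i).reverse ∈ revPrefixes P := by
  obtain ⟨t, ht, s, hs, hpt, _⟩ := pt_spec P SA hSA hi
  exact (mem_revPrefixes_iff P _).2 ⟨t, ht, s, hs, by rw [hpt]⟩

theorem part_exists {t : List α} (ht : t ∈ P.strs) {s : List α} (hs : s <:+ t) :
    ∃ i, i < (mP P).length ∧ pt P SA i = s.map sym := by
  obtain ⟨p, hp, rest, hrest⟩ := mP_exists P ht hs
  obtain ⟨i, hi, hieq⟩ := rank_exists P SA hSA hp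
  refine ⟨i, hi, ?_⟩
  rw [pt, hieq, hrest, takeWhile_sep]

/-- Contiguity: ranks with equal parts form intervals. -/
theorem pt_between {i j k : ℕ} (hij : i ≤ j) (hjk : j ≤ k) (hk : k < (mP P).length)
    (h : pt P SA i = pt P SA k) : pt P SA j = pt P SA i := by
  rcases eq_or_lt_of_le hij with rfl | hij'
  · rfl
  rcases eq_or_lt_of_le hjk with rfl | hjk'
  · exact h.symm
  have hj : j < (mP P).length := lt_trans hjk' hk
  have hi : i < (mP P).length := lt_trans hij' hj
  have hp1 : pt P SA i ++ [⊥] <+: (mP P).drop (SA i) := ptb_prefix P SA hSA hi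
  have hp2 : pt P SA i ++ [⊥] <+: (mP P).drop (SA k) := by
    rw [h]; exact ptb_prefix P SA hSA hk
  have hb : pt P SA i ++ [⊥] <+: (mP P).drop (SA j) :=
    between_prefix _ _ _ _ hp1 hp2 (suf_lex_s4 P SA hSA hij' hj) (suf_lex_s4 P SA hSA hjk' hk)
  obtain ⟨rest, hrest⟩ := hb
  obtain ⟨t, ht, s, hs, hpt, _⟩ := pt_spec P SA hSA hi
  rw [pt, ← hrest, append_assoc, singleton_append, hpt, takeWhile_sep, ← hpt]

/-- Strictly shorter parts (in the prefix order) occur at strictly smaller ranks. -/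
theorem pt_lt {i j : ℕ} (hi : i < (mP P).length) (hj : j < (mP P).length)
    (hpre : pt P SA i <+: pt P SA j) (hne : pt P SA i ≠ pt P SA j) : i < j := by
  obtain ⟨t, ht, s, hs, hpt, rest, hrest⟩ := pt_spec P SA hSA hi
  obtain ⟨t', ht', s', hs', hpt', rest', hrest'⟩ := pt_spec P SA hSA hj
  obtain ⟨d, hd⟩ := hpre
  have hdne : d ≠ [] := by rintro rfl; exact hne (by simpa using hd)
  obtain ⟨c, d', rfl⟩ := List.exists_cons_of_ne_nil hdne
  have hcne : c ≠ ⊥ := pt_no_bot P SA j c (by rw [← hd]; simp)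
  have hlex : List.Lex (· < ·) ((mP P).drop (SA i)) ((mP P).drop (SA j)) := by
    rw [hrest, hrest', ← hd]
    rw [append_assoc, cons_append]
    exact lex_append_left (List.Lex.rel (by simpa using hcne.bot_lt))
  rcases lt_trichotomy i j with h | rfl | h
  · exact h
  · exact absurd rfl hne
  · exact absurd hlex (fun hl => lex_asymm hl (suf_lex_s4 P SA hSA h hi))

end WithHyp

end Aux2

section Aux3

open List

variable {β : Type*} [LinearOrder β]

theorem lex_append_left_iff {a b : List β} : ∀ (p : List β),
    List.Lex (· < ·) (p ++ a) (p ++ b) ↔ List.Lex (· < ·) a b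
  | [] => Iff.rfl
  | x :: p => by
    rw [cons_append, cons_append, List.lex_cons_iff, lex_append_left_iff p]

variable {α : Type*} [LinearOrder α]
variable (P : OSS α) (SA : ℕ → ℕ) (hSA : IsSuffixArray (mP P) SA)
include hSA

/-- `LCP[i] = LRS[i]` iff ranks `i-1` and `i` hold the same part. -/
theorem lcpP_eq_lrs_iff {i : ℕ} (h0 : 0 < i) (hi : i < (mP P).length) :
    lcpP (mP P) SA i = lrs (mP P) SA i ↔ pt P SA (i - 1) = pt P SA i := by
  have hi1 : i - 1 < (mP P).length := lt_of_le_of_lt (Nat.sub_le i 1) hi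
  have hlex : List.Lex (· < ·) ((mP P).drop (SA (i - 1))) ((mP P).drop (SA i)) :=
    suf_lex_s4 P SA hSA (by omega) hi
  obtain ⟨t, ht, s, hs, hpt, rest, hrest⟩ := pt_spec P SA hSA hi
  constructor
  · intro h
    rw [lcpP, if_neg (Nat.pos_iff_ne_zero.1 h0)] at h
    have hge : lrs (mP P) SA i ≤ lcpLen ((mP P).drop (SA (i - 1))) ((mP P).drop (SA i)) := by
      rcases min_eq_iff.1 h with ⟨h1, _⟩ | ⟨h1, h2⟩
      · omega
      · exact h2
    have htake := take_eq_of_le_lcpLen_s4 hge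
    have hpti : ((mP P).drop (SA i)).take (lrs (mP P) SA i) = pt P SA i := by
      rw [lrs_eq]
      exact (prefix_iff_eq_take.1 (pt_prefix P SA i)).symm
    rw [hpti] at htake
    -- pt i is a prefix of suf (i-1)
    obtain ⟨w, hw⟩ : pt P SA i <+: (mP P).drop (SA (i - 1)) := by
      rw [← htake]; exact take_prefix _ _
    rw [← hw, hrest, lex_append_left_iff] at hlex
    match w, hlex with
    | [], _ =>
      exfalso
      have := bot_mem_suf P SA hSA hi1
      rw [← hw] at this
      simp at this
      exact pt_no_bot P SA i ⊥ this rfl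
    | c :: w', hlex' =>
      have hc : c = ⊥ := by
        rcases lex_cons_cons.1 hlex' with hlt | ⟨rfl, _⟩
        · exact absurd hlt (by simp)
        · rfl
      subst hc
      rw [pt, ← hw, hpt, takeWhile_sep, ← hpt]
  · intro h
    have h1 : pt P SA i ++ [⊥] <+: (mP P).drop (SA (i - 1)) := by
      rw [← h]; exact ptb_prefix P SA hSA hi1
    have h2 : pt P SA i ++ [⊥] <+: (mP P).drop (SA i) := ptb_prefix P SA hSA hi
    have hlcp : lrs (mP P) SA i + 1 ≤
        lcpLen ((mP P).drop (SA (i - 1))) ((mP P).drop (SA i)) := by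
      have := prefix_lcpLen _ _ _ h1 h2
      simpa [lrs_eq] using this
    rw [lcpP, if_neg (Nat.pos_iff_ne_zero.1 h0)]
    omega

/-- All ranks within a `DecompBWT` interval share the same part. -/
theorem decomp_pt_const {u : ℕ × ℕ} (hu : u ∈ DecompBWT (mP P) SA) :
    ∀ k, u.1 ≤ k → k ≤ u.2 → pt P SA k = pt P SA u.1 := by
  obtain ⟨h12, h2N, hint, _, _⟩ := hu
  intro k hk1 hk2
  induction k with
  | zero => have : u.1 = 0 := Nat.le_zero.1 hk1; rw [this]
  | succ n ih =>
    rcases Nat.lt_or_ge u.1 (n+1) with h | h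
    · have hn1 : n + 1 < (mP P).length := lt_of_le_of_lt hk2 h2N
      have := (lcpP_eq_lrs_iff P SA hSA (Nat.succ_pos n) hn1).1 (hint (n+1) h hk2)
      simp only [Nat.succ_eq_add_one, Nat.add_sub_cancel] at this
      rw [← this]
      exact ih (by omega) (by omega)
    · have : u.1 = n + 1 := le_antisymm hk1 h
      rw [this]


end Aux3

section Aux4

open List

variable {α : Type*} [LinearOrder α]
variable (P : OSS α) (SA : ℕ → ℕ) (hSA : IsSuffixArray (mP P) SA)
include hSA

theorem decomp_first_le {u v : ℕ × ℕ} (hu : u ∈ DecompBWT (mP P) SA)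
    (hv : v ∈ DecompBWT (mP P) SA) (h : pt P SA u.1 = pt P SA v.1) (hle : u.1 ≤ v.1) :
    u.1 = v.1 := by
  by_contra hne
  have hlt : u.1 < v.1 := lt_of_le_of_ne hle hne
  have hv1N : v.1 < (mP P).length := lt_of_le_of_lt hv.1 hv.2.1
  have hbet := pt_between P SA hSA (i := u.1) (j := v.1 - 1) (k := v.1)
    (by omega) (by omega) hv1N h
  rcases hv.2.2.2.1 with h0 | hne'
  · omega
  · exact hne' ((lcpP_eq_lrs_iff P SA hSA (by omega) hv1N).2 (by rw [hbet, h]))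

theorem decomp_unique {u v : ℕ × ℕ} (hu : u ∈ DecompBWT (mP P) SA)
    (hv : v ∈ DecompBWT (mP P) SA) (h : pt P SA u.1 = pt P SA v.1) : u = v := by
  have hu1 := hu.1
  have hv1 := hv.1
  have hu2 := hu.2.1
  have hv2 := hv.2.1
  have h1 : u.1 = v.1 := by
    rcases le_total u.1 v.1 with hle | hle
    · exact decomp_first_le P SA hSA hu hv h hle
    · exact (decomp_first_le P SA hSA hv hu h.symm hle).symm
  have h2 : u.2 = v.2 := by
    by_contra hne
    rcases Ne.lt_or_gt hne with hlt | hlt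
    · have hint := hv.2.2.1 (u.2 + 1) (by omega) (by omega)
      rcases hu.2.2.2.2 with hN | hne'
      · omega
      · exact hne' hint
    · have hint := hu.2.2.1 (v.2 + 1) (by omega) (by omega)
      rcases hv.2.2.2.2 with hN | hne'
      · omega
      · exact hne' hint
  exact Prod.ext h1 h2

theorem decomp_exists {k : ℕ} (hk : k < (mP P).length) :
    ∃ u ∈ DecompBWT (mP P) SA, u.1 ≤ k ∧ k ≤ u.2 := by
  classical
  set N := (mP P).length with hN
  obtain ⟨a, hQa, hamin⟩ : ∃ a, (a ≤ k ∧ ∀ l, a ≤ l → l ≤ k → pt P SA l = pt P SA k) ∧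
      ∀ b, b < a → ¬ (b ≤ k ∧ ∀ l, b ≤ l → l ≤ k → pt P SA l = pt P SA k) := by
    have hQk : k ≤ k ∧ ∀ l, k ≤ l → l ≤ k → pt P SA l = pt P SA k :=
      ⟨le_refl k, fun l h1 h2 => by rw [le_antisymm h2 h1]⟩
    have hex : ∃ a, a ≤ k ∧ ∀ l, a ≤ l → l ≤ k → pt P SA l = pt P SA k := ⟨k, hQk⟩
    exact ⟨Nat.find hex, Nat.find_spec hex, fun b hb => Nat.find_min hex hb⟩
  obtain ⟨b, hkb, hBigb, hbmax⟩ : ∃ b, k ≤ b ∧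
      (b < N ∧ ∀ l, k ≤ l → l ≤ b → pt P SA l = pt P SA k) ∧
      ∀ c, b < c → c ≤ N - 1 → ¬ (c < N ∧ ∀ l, k ≤ l → l ≤ c → pt P SA l = pt P SA k) := by
    set Big : ℕ → Prop := fun c => c < N ∧ ∀ l, k ≤ l → l ≤ c → pt P SA l = pt P SA k
      with hBigdef
    have hBigk : Big k := ⟨hk, fun l h1 h2 => by rw [le_antisymm h2 h1]⟩
    have hkN1 : k ≤ N - 1 := by omega
    exact ⟨Nat.findGreatest Big (N - 1), Nat.le_findGreatest hkN1 hBigk,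
      Nat.findGreatest_spec hkN1 hBigk, fun c h1 h2 => Nat.findGreatest_is_greatest h1 h2⟩
  have hak := hQa.1
  have hbN := hBigb.1
  have hab : a ≤ b := le_trans hak hkb
  have hall : ∀ l, a ≤ l → l ≤ b → pt P SA l = pt P SA k := by
    intro l h1 h2
    rcases le_total l k with h | h
    · exact hQa.2 l h1 h
    · exact hBigb.2 l h h2
  refine ⟨(a, b), ⟨hab, hbN, ?_, ?_, ?_⟩, hak, hkb⟩
  · intro l h1 h2
    simp only at h1 h2
    have hlN : l < N := lt_of_le_of_lt h2 hbN
    refine (lcpP_eq_lrs_iff P SA hSA (by omega) hlN).2 ?_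
    rw [hall l (by omega) h2, hall (l - 1) (by omega) (by omega)]
  · simp only
    rcases Nat.eq_zero_or_pos a with h0 | hpos
    · exact Or.inl h0
    refine Or.inr ?_
    have hne : pt P SA (a - 1) ≠ pt P SA k := by
      intro h
      refine hamin (a - 1) (by omega) ⟨by omega, fun l h1 h2 => ?_⟩
      rcases Nat.lt_or_ge l a with hl | hl
      · have : l = a - 1 := by omega
        rw [this, h]
      · exact hQa.2 l hl h2
    intro heq
    have := (lcpP_eq_lrs_iff P SA hSA hpos (by omega)).1 heq
    exact hne (by rw [this, hQa.2 a (le_refl a) hak])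
  · simp only
    rcases Nat.lt_or_ge (b + 1) N with hlt | hge
    · refine Or.inr ?_
      have hne : pt P SA (b + 1) ≠ pt P SA k := by
        intro h
        refine hbmax (b + 1) (by omega) (by omega) ⟨hlt, fun l h1 h2 => ?_⟩
        rcases Nat.lt_or_ge b l with hl | hl
        · have : l = b + 1 := by omega
          rw [this, h]
        · exact hBigb.2 l h1 hl
      intro heq
      have h2 := (lcpP_eq_lrs_iff P SA hSA (by omega) hlt).1 heq
      simp only [Nat.add_sub_cancel] at h2
      exact hne (by rw [← h2, hall b hab (le_refl b)])
    · exact Or.inl (by omega)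


end Aux4

section Aux5

open List

variable {α : Type*} [LinearOrder α]
variable (P : OSS α) (SA : ℕ → ℕ) (hSA : IsSuffixArray (mP P) SA)
include hSA

theorem bijOn_decPre :
    Set.BijOn (decPre (mP P) SA) (DecompBWT (mP P) SA) (revPrefixes P) := by
  refine ⟨?_, ?_, ?_⟩
  · intro u hu
    rw [decPre_eq]
    exact pt_rev_mem P SA hSA (lt_of_le_of_lt hu.1 hu.2.1)
  · intro u hu v hv h
    rw [decPre_eq, decPre_eq] at h
    exact decomp_unique P SA hSA hu hv (List.reverse_injective h)
  · intro r hr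
    obtain ⟨t, ht, s, hs, rfl⟩ := (mem_revPrefixes_iff P r).1 hr
    obtain ⟨i, hi, hpti⟩ := part_exists P SA hSA ht hs
    obtain ⟨u, hu, h1, h2⟩ := decomp_exists P SA hSA hi
    refine ⟨u, hu, ?_⟩
    rw [decPre_eq, ← decomp_pt_const P SA hSA hu i h1 h2, hpti]

theorem rev_mem_to_rank {r : List (WithBot α)} (hr : r ∈ revPrefixes P) :
    ∃ j, j < (mP P).length ∧ pt P SA j = r.reverse := by
  obtain ⟨t, ht, s, hs, rfl⟩ := (mem_revPrefixes_iff P r).1 hr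
  obtain ⟨j, hj, hptj⟩ := part_exists P SA hSA ht hs
  exact ⟨j, hj, by rw [hptj, reverse_reverse]⟩

theorem take_stable {K k : ℕ} : ∀ i, k ≤ i → i < (mP P).length →
    (∀ l, k < l → l ≤ i → K ≤ lcpLen ((mP P).drop (SA (l - 1))) ((mP P).drop (SA l))) →
    ((mP P).drop (SA i)).take K = ((mP P).drop (SA k)).take K := by
  intro i
  induction i with
  | zero => intro h _ _; have : k = 0 := Nat.le_zero.1 h; rw [this]
  | succ n ih =>
    intro h hn hl
    rcases Nat.lt_or_ge k (n + 1) with hk | hk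
    · have h1 : ((mP P).drop (SA n)).take K = ((mP P).drop (SA (n + 1))).take K := by
        have := hl (n + 1) hk (le_refl _)
        simp only [Nat.add_sub_cancel] at this
        exact take_eq_of_le_lcpLen_s4 this
      rw [← h1]
      exact ih (by omega) (by omega) (fun l a b => hl l a (by omega))
    · have : k = n + 1 := by omega
      rw [this]

/-- A failure candidate's part is a proper prefix of the part of `u.1`. -/
theorem failcand_prefix {u : ℕ × ℕ} (hu : u ∈ DecompBWT (mP P) SA) {k : ℕ}
    (hk : FailCand (mP P) SA u.1 k) :
    pt P SA k <+: pt P SA u.1 ∧ pt P SA k ≠ pt P SA u.1 := by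
  have hiN : u.1 < (mP P).length := lt_of_le_of_lt hu.1 hu.2.1
  have hki : k < u.1 := hk.1
  have htake : ((mP P).drop (SA u.1)).take (lrs (mP P) SA k) =
      ((mP P).drop (SA k)).take (lrs (mP P) SA k) := by
    refine take_stable P SA hSA u.1 (le_of_lt hki) hiN ?_
    intro l hl1 hl2
    have := hk.2 l hl1 hl2
    rw [lcpP, if_neg (by omega)] at this
    exact le_trans this (min_le_left _ _)
  have hptk : ((mP P).drop (SA k)).take (lrs (mP P) SA k) = pt P SA k := by
    rw [lrs_eq]
    exact (prefix_iff_eq_take.1 (pt_prefix P SA k)).symm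
  rw [hptk] at htake
  have hpre1 : pt P SA k <+: (mP P).drop (SA u.1) := by
    rw [← htake]; exact take_prefix _ _
  have hpre : pt P SA k <+: pt P SA u.1 := by
    refine prefix_takeWhile _ _ hpre1 ?_
    intro a ha
    simpa using pt_no_bot P SA k a ha
  refine ⟨hpre, ?_⟩
  intro heq
  have hbet := pt_between P SA hSA (i := k) (j := u.1 - 1) (k := u.1)
    (by omega) (by omega) hiN heq
  rcases hu.2.2.2.1 with h0 | hne'
  · omega
  · exact hne' ((lcpP_eq_lrs_iff P SA hSA (by omega) hiN).2 (by rw [hbet, heq]))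

/-- common prefix of all suffixes between two ranks -/
theorem prefix_all_between {p : List (WithBot α)} {a b l : ℕ}
    (ha : p <+: (mP P).drop (SA a)) (hb : p <+: (mP P).drop (SA b))
    (hal : a ≤ l) (hlb : l ≤ b) (hbN : b < (mP P).length) :
    p <+: (mP P).drop (SA l) := by
  rcases eq_or_lt_of_le hal with rfl | h1
  · exact ha
  rcases eq_or_lt_of_le hlb with rfl | h2
  · exact hb
  exact between_prefix _ _ _ _ ha hb (suf_lex_s4 P SA hSA h1 (by omega))
    (suf_lex_s4 P SA hSA h2 hbN)

/-- The right end of a block whose part is a proper prefix of `pt u.1` is a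
failure candidate for `u.1`. -/
theorem failcand_of_block {u w : ℕ × ℕ} (hu : u ∈ DecompBWT (mP P) SA)
    (hw : w ∈ DecompBWT (mP P) SA)
    (hpre : pt P SA w.1 <+: pt P SA u.1) (hne : pt P SA w.1 ≠ pt P SA u.1) :
    FailCand (mP P) SA u.1 w.2 := by
  have hiN : u.1 < (mP P).length := lt_of_le_of_lt hu.1 hu.2.1
  have hw2N : w.2 < (mP P).length := hw.2.1
  have hptw2 : pt P SA w.2 = pt P SA w.1 := decomp_pt_const P SA hSA hw w.2 hw.1 (le_refl _)
  have hw2u1 : w.2 < u.1 := by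
    refine pt_lt P SA hSA hw2N hiN ?_ ?_
    · rw [hptw2]; exact hpre
    · rw [hptw2]; exact hne
  refine ⟨hw2u1, ?_⟩
  intro l hl1 hl2
  have hlN : l < (mP P).length := by omega
  have hpa : pt P SA w.1 <+: (mP P).drop (SA w.2) := by
    rw [← hptw2]; exact pt_prefix P SA w.2
  have hpb : pt P SA w.1 <+: (mP P).drop (SA u.1) :=
    hpre.trans (pt_prefix P SA u.1)
  have hpl : pt P SA w.1 <+: (mP P).drop (SA l) :=
    prefix_all_between P SA hSA hpa hpb (by omega) hl2 hiN
  have hpl1 : pt P SA w.1 <+: (mP P).drop (SA (l - 1)) :=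
    prefix_all_between P SA hSA hpa hpb (by omega) (by omega) hiN
  have hlenw2 : lrs (mP P) SA w.2 = (pt P SA w.1).length := by rw [lrs_eq, hptw2]
  rw [lcpP, if_neg (by omega), hlenw2]
  refine le_min (prefix_lcpLen _ _ _ hpl1 hpl) ?_
  rw [lrs_eq]
  refine List.IsPrefix.length_le ?_
  refine prefix_takeWhile _ _ hpl ?_
  intro a ha
  simpa using pt_no_bot P SA w.1 a ha


end Aux5

section Aux7

open List

variable {α : Type*} [LinearOrder α]

theorem AF_iso_ACFL' (P : OSS α) (SA : ℕ → ℕ)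
    (hSA : IsSuffixArray (mP P) SA) :
    Set.BijOn (decPre (mP P) SA) (DecompBWT (mP P) SA) (revPrefixes P) ∧
    ∀ u v : ℕ × ℕ, u ∈ DecompBWT (mP P) SA → v ∈ DecompBWT (mP P) SA →
      ((u, v) ∈ AF (mP P) SA ↔
        ACFLedge (revPrefixes P) (decPre (mP P) SA u) (decPre (mP P) SA v)) := by
  refine ⟨bijOn_decPre P SA hSA, ?_⟩
  intro u v hu hv
  have hiN : u.1 < (mP P).length := lt_of_le_of_lt hu.1 hu.2.1
  have hv1N : v.1 < (mP P).length := lt_of_le_of_lt hv.1 hv.2.1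
  rw [decPre_eq, decPre_eq]
  constructor
  · rintro ⟨-, -, k, hfc, hmax, hvk1, hvk2⟩
    have hkN : k < (mP P).length := lt_trans hfc.1 hiN
    have hptk : pt P SA k = pt P SA v.1 := decomp_pt_const P SA hSA hv k hvk1 hvk2
    obtain ⟨hpre, hne⟩ := failcand_prefix P SA hSA hu hfc
    rw [hptk] at hpre hne
    refine ⟨pt_rev_mem P SA hSA hiN, pt_rev_mem P SA hSA hv1N, ?_, ?_, ?_⟩
    · intro h
      exact hne (List.reverse_injective h).symm
    · exact List.reverse_suffix.2 hpre
    · -- maximality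
      intro r hr hrneq hrsuf
      obtain ⟨j, hjN, hptj⟩ := rev_mem_to_rank P SA hSA hr
      have hjpre : pt P SA j <+: pt P SA u.1 := by
        rw [hptj]
        have := List.reverse_suffix.1 (by rwa [reverse_reverse] : r.reverse.reverse <:+ (pt P SA u.1).reverse)
        exact this
      have hjne : pt P SA j ≠ pt P SA u.1 := by
        rw [hptj]
        intro h
        exact hrneq (by rw [← h, reverse_reverse])
      obtain ⟨w, hw, hw1, hw2⟩ := decomp_exists P SA hSA hjN
      have hptw : pt P SA j = pt P SA w.1 := decomp_pt_const P SA hSA hw j hw1 hw2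
      have hfcw : FailCand (mP P) SA u.1 w.2 :=
        failcand_of_block P SA hSA hu hw (hptw ▸ hjpre) (hptw ▸ hjne)
      have hw2k : w.2 ≤ k := hmax w.2 hfcw
      have hw2N : w.2 < (mP P).length := hw.2.1
      have hptw2 : pt P SA w.2 = pt P SA j := by
        rw [decomp_pt_const P SA hSA hw w.2 hw.1 (le_refl _), hptw]
      -- length comparison
      have hlen : (pt P SA w.2).length ≤ (pt P SA k).length := by
        by_contra hgt
        push_neg at hgt
        have hkpre : pt P SA k <+: pt P SA w.2 := by
          refine List.prefix_of_prefix_length_le (l₃ := pt P SA u.1) ?_ ?_ (le_of_lt hgt)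
          · rw [hptk]; exact hpre
          · rw [hptw2]; exact hjpre
        have hkne : pt P SA k ≠ pt P SA w.2 := by
          intro h
          rw [h] at hgt
          exact lt_irrefl _ hgt
        have := pt_lt P SA hSA hkN hw2N hkpre hkne
        omega
      rw [hptw2, hptj] at hlen
      rw [hptk] at hlen
      simpa using hlen
  · rintro ⟨-, -, hne, hsuf, hmax⟩
    have hpre : pt P SA v.1 <+: pt P SA u.1 := List.reverse_suffix.1 hsuf
    have hne' : pt P SA v.1 ≠ pt P SA u.1 := fun h => hne (by rw [h])
    have hfc : FailCand (mP P) SA u.1 v.2 :=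
      failcand_of_block P SA hSA hu hv hpre hne'
    refine ⟨hu, hv, v.2, hfc, ?_, hv.1, le_refl _⟩
    intro k' hk'
    have hk'N : k' < (mP P).length := lt_trans hk'.1 hiN
    obtain ⟨hpre', hne''⟩ := failcand_prefix P SA hSA hu hk'
    have hrmem : (pt P SA k').reverse ∈ revPrefixes P := pt_rev_mem P SA hSA hk'N
    have hrlen : (pt P SA k').length ≤ (pt P SA v.1).length := by
      have := hmax (pt P SA k').reverse hrmem
        (fun h => hne'' (List.reverse_injective h))
        (List.reverse_suffix.2 hpre')
      simpa using this
    have hk'pre : pt P SA k' <+: pt P SA v.1 :=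
      List.prefix_of_prefix_length_le hpre' hpre hrlen
    rcases eq_or_ne (pt P SA k') (pt P SA v.1) with heq | hneq
    · obtain ⟨w, hw, hw1, hw2⟩ := decomp_exists P SA hSA hk'N
      have hptw : pt P SA k' = pt P SA w.1 := decomp_pt_const P SA hSA hw k' hw1 hw2
      have hwv : w = v := decomp_unique P SA hSA hw hv (by rw [← hptw, heq])
      rw [hwv] at hw2
      exact hw2
    · have := pt_lt P SA hSA hk'N hv1N hk'pre hneq
      have := hv.1
      omega


end Aux7

/-- `(u,v) ∈ A_F(P)` iff `Dec_Pre[v]` is the longest proper suffix of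
`Dec_Pre[u]` among the elements of `Prefix(←P.S)`; consequently (together with the
bijectivity of `Dec_Pre`) the graph `(Decomp_BWT(P), A_F(P))` is isomorphic, via
`Dec_Pre`, to the Aho–Corasick failure-link graph `ACFL(←P.S)`. -/
theorem AF_iso_ACFL [Fintype α] [LinearOrder α] (P : OSS α) (SA : ℕ → ℕ)
    (hSA : IsSuffixArray (mP P) SA) :
    Set.BijOn (decPre (mP P) SA) (DecompBWT (mP P) SA) (revPrefixes P) ∧
    ∀ u v : ℕ × ℕ, u ∈ DecompBWT (mP P) SA → v ∈ DecompBWT (mP P) SA →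
      ((u, v) ∈ AF (mP P) SA ↔
        ACFLedge (revPrefixes P) (decPre (mP P) SA u) (decPre (mP P) SA v)) :=
  AF_iso_ACFL' P SA hSA

end BwtXbw
end
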